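/- arXiv:1704.08747 — 12 statements merged into one kernel-verified Lean document; each statement's English description precedes it below -/
import Mathlib

section
/- In a three-circle configuration, there exist a point I and a real number r > 0 such that X, Y, Z all lie on the circle centered at I with radius r, and this circle is orthogonal to each of the three given circles, i.e., (dist I A)² = a² + r², (dist I B)² = b² + r², and (dist I C)² = c² + r² (the radical circle of the three circles passes through the three points of tangency). -/
open EuclideanGeometry

local notation "E" => EuclideanSpace ℝ (Fin 2)

private lemma between_pt (A B Z : E) (a b : ℝ) (ha : 0 < a) (hb : 0 < b)
    (hAB : dist A B = a + b) (hZA : dist A Z = a) (hZB : dist B Z = b) :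
    Z = A + (a / (a + b)) • (B - A) := by
  have hsum : dist A Z + dist Z B = dist A B := by
    rw [hZA, dist_comm Z B, hZB, hAB]
  have hw : Wbtw ℝ A Z B := dist_add_dist_eq_iff.mp hsum
  obtain ⟨t, ht, hZ⟩ := hw
  have hdist : dist A Z = |t| * dist A B := by
    rw [← hZ, dist_left_lineMap]; simp [Real.norm_eq_abs]
  have habs : |t| = t := abs_of_nonneg ht.1
  have hab : (0:ℝ) < a + b := by linarith
  have htval : t = a / (a + b) := by
    rw [hZA, hAB, habs] at hdist
    field_simp
    linarith [hdist]
  rw [← hZ, htval, AffineMap.lineMap_apply]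
  simp [add_comm]

private lemma norm_comb (u v : E) (α β : ℝ) :
    ‖α • u + β • v‖ ^ 2 =
      α ^ 2 * inner ℝ u u + 2 * α * β * inner ℝ u v + β ^ 2 * inner ℝ v v := by
  rw [← real_inner_self_eq_norm_sq]
  simp only [inner_add_left, inner_add_right, real_inner_smul_left, real_inner_smul_right,
    real_inner_comm u v]
  ring

set_option maxHeartbeats 1000000 in
/-- The radical circle of three mutually externally tangent circles passes
through the three points of tangency and is orthogonal to each circle. -/
theorem radical_circle_through_tangency_points
    (A B C X Y Z : EuclideanSpace ℝ (Fin 2)) (a b c : ℝ)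
    (ha : 0 < a) (hb : 0 < b) (hc : 0 < c)
    (hAB : dist A B = a + b) (hBC : dist B C = b + c) (hAC : dist A C = a + c)
    (hZA : dist A Z = a) (hZB : dist B Z = b)
    (hXB : dist B X = b) (hXC : dist C X = c)
    (hYA : dist A Y = a) (hYC : dist C Y = c) :
    ∃ (I : EuclideanSpace ℝ (Fin 2)) (r : ℝ), 0 < r ∧
      dist I X = r ∧ dist I Y = r ∧ dist I Z = r ∧
      (dist I A) ^ 2 = a ^ 2 + r ^ 2 ∧
      (dist I B) ^ 2 = b ^ 2 + r ^ 2 ∧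
      (dist I C) ^ 2 = c ^ 2 + r ^ 2 := by
  set u := B - A with hu
  set v := C - A with hv
  have hs : (0:ℝ) < a + b + c := by linarith
  set q : ℝ := a * b * c / (a + b + c) with hq
  have hq0 : 0 < q := by positivity
  -- inner product data
  have huu : (inner ℝ u u : ℝ) = (a + b) ^ 2 := by
    rw [real_inner_self_eq_norm_sq, hu, ← dist_eq_norm, dist_comm, hAB]
  have hvv : (inner ℝ v v : ℝ) = (a + c) ^ 2 := by
    rw [real_inner_self_eq_norm_sq, hv, ← dist_eq_norm, dist_comm, hAC]
  have huv : (inner ℝ u v : ℝ) = a ^ 2 + a * b + a * c - b * c := by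
    have h1 : ‖u - v‖ ^ 2 = (b + c) ^ 2 := by
      have : u - v = B - C := by rw [hu, hv]; abel
      rw [this, ← dist_eq_norm, hBC]
    have h2 : (inner ℝ (u - v) (u - v) : ℝ) = (b + c) ^ 2 := by
      rw [real_inner_self_eq_norm_sq]; exact h1
    have hexp : (inner ℝ (u - v) (u - v) : ℝ) =
        inner ℝ u u - 2 * inner ℝ u v + inner ℝ v v := by
      simp only [inner_sub_left, inner_sub_right, real_inner_comm v u]
      ring
    rw [hexp, huu, hvv] at h2
    nlinarith [h2]
  -- positions of the tangency points
  have hZeq : Z = A + (a / (a + b)) • u := between_pt A B Z a b ha hb hAB hZA hZB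
  have hYeq : Y = A + (a / (a + c)) • v := between_pt A C Y a c ha hc hAC hYA hYC
  have hXeq : X = B + (b / (b + c)) • (C - B) := between_pt B C X b c hb hc hBC hXB hXC
  -- the incenter
  set I : E := A + ((a + c) / (2 * (a + b + c))) • u + ((a + b) / (2 * (a + b + c))) • v
    with hI
  refine ⟨I, Real.sqrt q, Real.sqrt_pos.mpr hq0, ?_, ?_, ?_, ?_, ?_, ?_⟩
  all_goals rw [dist_eq_norm]
  · -- X
    have hd : I - X = ((a + c) / (2 * (a + b + c)) - 1 + b / (b + c)) • u +
        ((a + b) / (2 * (a + b + c)) - b / (b + c)) • v := by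
      rw [hI, hXeq, hu, hv]; module
    have h2 : ‖I - X‖ ^ 2 = q := by
      rw [hd, norm_comb, huu, hvv, huv, hq]
      have hbc : (b + c) ≠ 0 := by positivity
      have hs' : (a + b + c) ≠ 0 := by positivity
      field_simp
      ring
    rw [← h2, Real.sqrt_sq (norm_nonneg _)]
  · -- Y
    have hd : I - Y = ((a + c) / (2 * (a + b + c))) • u +
        ((a + b) / (2 * (a + b + c)) - a / (a + c)) • v := by
      rw [hI, hYeq, hu, hv]; module
    have h2 : ‖I - Y‖ ^ 2 = q := by
      rw [hd, norm_comb, huu, hvv, huv, hq]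
      have h1 : (a + c) ≠ 0 := by positivity
      have hs' : (a + b + c) ≠ 0 := by positivity
      field_simp
      ring
    rw [← h2, Real.sqrt_sq (norm_nonneg _)]
  · -- Z
    have hd : I - Z = ((a + c) / (2 * (a + b + c)) - a / (a + b)) • u +
        ((a + b) / (2 * (a + b + c))) • v := by
      rw [hI, hZeq, hu, hv]; module
    have h2 : ‖I - Z‖ ^ 2 = q := by
      rw [hd, norm_comb, huu, hvv, huv, hq]
      have h1 : (a + b) ≠ 0 := by positivity
      have hs' : (a + b + c) ≠ 0 := by positivity
      field_simp
      ring
    rw [← h2, Real.sqrt_sq (norm_nonneg _)]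
  · -- A
    have hd : I - A = ((a + c) / (2 * (a + b + c))) • u +
        ((a + b) / (2 * (a + b + c))) • v := by
      rw [hI, hu, hv]; module
    rw [hd, norm_comb, huu, hvv, huv, Real.sq_sqrt hq0.le, hq]
    have hs' : (a + b + c) ≠ 0 := by positivity
    field_simp
    ring
  · -- B
    have hd : I - B = ((a + c) / (2 * (a + b + c)) - 1) • u +
        ((a + b) / (2 * (a + b + c))) • v := by
      rw [hI, hu, hv]; module
    rw [hd, norm_comb, huu, hvv, huv, Real.sq_sqrt hq0.le, hq]
    have hs' : (a + b + c) ≠ 0 := by positivity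
    field_simp
    ring
  · -- C
    have hd : I - C = ((a + c) / (2 * (a + b + c))) • u +
        ((a + b) / (2 * (a + b + c)) - 1) • v := by
      rw [hI, hu, hv]; module
    rw [hd, norm_comb, huu, hvv, huv, Real.sq_sqrt hq0.le, hq]
    have hs' : (a + b + c) ≠ 0 := by positivity
    field_simp
    ring
end

section
/- In a three-circle configuration, there exist a point I and a real number r > 0 such that X, Y, Z lie on the circle centered at I with radius r, and this circle is the incircle of triangle ABC touching the sides at these points: the vector I - Z is orthogonal to B - A, the vector I - X is orthogonal to C - B, and the vector I - Y is orthogonal to C - A. -/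
open scoped RealInnerProductSpace

private lemma inner_comb {E : Type*} [NormedAddCommGroup E] [InnerProductSpace ℝ E]
    (u v : E) (α β γ δ : ℝ) :
    ⟪α • u + β • v, γ • u + δ • v⟫ =
      α * γ * ⟪u, u⟫ + (α * δ + β * γ) * ⟪u, v⟫ + β * δ * ⟪v, v⟫ := by
  simp only [inner_add_left, inner_add_right, real_inner_smul_left, real_inner_smul_right,
    real_inner_comm v u]
  ring

private lemma inner_comb_u {E : Type*} [NormedAddCommGroup E] [InnerProductSpace ℝ E]
    (u v : E) (α β : ℝ) :
    ⟪α • u + β • v, u⟫ = α * ⟪u, u⟫ + β * ⟪u, v⟫ := by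
  simp only [inner_add_left, real_inner_smul_left, real_inner_comm v u]

private lemma inner_comb_v {E : Type*} [NormedAddCommGroup E] [InnerProductSpace ℝ E]
    (u v : E) (α β : ℝ) :
    ⟪α • u + β • v, v⟫ = α * ⟪u, v⟫ + β * ⟪v, v⟫ := by
  simp only [inner_add_left, real_inner_smul_left]

private lemma inner_comb_vu {E : Type*} [NormedAddCommGroup E] [InnerProductSpace ℝ E]
    (u v : E) (α β : ℝ) :
    ⟪α • u + β • v, v - u⟫ = (α - β) * ⟪u, v⟫ + β * ⟪v, v⟫ - α * ⟪u, u⟫ := by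
  simp only [inner_sub_right, inner_add_left, real_inner_smul_left, real_inner_comm v u]
  ring

private lemma point_on_seg {E : Type*} [NormedAddCommGroup E] [InnerProductSpace ℝ E]
    (A B Z : E) (x y : ℝ) (hx : 0 < x) (hy : 0 < y)
    (hAZ : dist A Z = x) (hBZ : dist B Z = y) (hAB : dist A B = x + y) :
    Z - A = (x / (x + y)) • (B - A) := by
  have hw : Wbtw ℝ A Z B := by
    rw [← dist_add_dist_eq_iff, hAZ, dist_comm Z B, hBZ, hAB]
  have hseg : Z ∈ segment ℝ A B := mem_segment_iff_wbtw.mpr hw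
  rw [segment_eq_image'] at hseg
  obtain ⟨t, ht, hZ⟩ := hseg
  dsimp only at hZ
  have hZA : Z - A = t • (B - A) := by rw [← hZ]; abel
  have hnorm : ‖B - A‖ = x + y := by rw [← dist_eq_norm, dist_comm, hAB]
  have hx' : x = t * (x + y) := by
    have : dist A Z = ‖t • (B - A)‖ := by rw [dist_comm, dist_eq_norm, hZA]
    rw [hAZ, norm_smul, Real.norm_eq_abs, abs_of_nonneg ht.1, hnorm] at this
    exact this
  have hxy : x + y ≠ 0 := by positivity
  have ht' : t = x / (x + y) := by field_simp; linarith
  rw [hZA, ht']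

set_option maxHeartbeats 1000000 in
/-- The circle through the three tangency points of three mutually externally
tangent circles is the incircle of the triangle of centers: its radii to the
tangency points are orthogonal to the corresponding sides. -/
theorem tangency_circle_is_incircle
    (A B C X Y Z : EuclideanSpace ℝ (Fin 2)) (a b c : ℝ)
    (ha : 0 < a) (hb : 0 < b) (hc : 0 < c)
    (hAB : dist A B = a + b) (hBC : dist B C = b + c) (hAC : dist A C = a + c)
    (hZA : dist A Z = a) (hZB : dist B Z = b)
    (hXB : dist B X = b) (hXC : dist C X = c)
    (hYA : dist A Y = a) (hYC : dist C Y = c) :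
    ∃ (I : EuclideanSpace ℝ (Fin 2)) (r : ℝ), 0 < r ∧
      dist I X = r ∧ dist I Y = r ∧ dist I Z = r ∧
      ⟪I - Z, B - A⟫ = (0 : ℝ) ∧
      ⟪I - X, C - B⟫ = (0 : ℝ) ∧
      ⟪I - Y, C - A⟫ = (0 : ℝ) := by
  set u : EuclideanSpace ℝ (Fin 2) := B - A with hu
  set v : EuclideanSpace ℝ (Fin 2) := C - A with hv
  set p : ℝ := a + b + c with hp
  have hp0 : (0:ℝ) < p := by positivity
  have hab0 : a + b ≠ 0 := by positivity
  have hac0 : a + c ≠ 0 := by positivity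
  have hbc0 : b + c ≠ 0 := by positivity
  have hp0' : p ≠ 0 := ne_of_gt hp0
  -- inner products of u, v
  have huu : ⟪u, u⟫ = (a + b) ^ 2 := by
    rw [real_inner_self_eq_norm_sq, hu, ← dist_eq_norm, dist_comm, hAB]
  have hvv : ⟪v, v⟫ = (a + c) ^ 2 := by
    rw [real_inner_self_eq_norm_sq, hv, ← dist_eq_norm, dist_comm, hAC]
  have huv : ⟪u, v⟫ = a ^ 2 + a * b + a * c - b * c := by
    have hBCs : dist B C ^ 2 = (b + c) ^ 2 := by rw [hBC]
    have h1 : ⟪u - v, u - v⟫ = (b + c) ^ 2 := by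
      have : u - v = B - C := by rw [hu, hv]; abel
      rw [this, real_inner_self_eq_norm_sq, ← dist_eq_norm, hBCs]
    have h2 : ⟪u - v, u - v⟫ = ⟪u, u⟫ - 2 * ⟪u, v⟫ + ⟪v, v⟫ := by
      simp only [inner_sub_left, inner_sub_right, real_inner_comm v u]; ring
    rw [huu, hvv, h1] at h2
    nlinarith
  -- positions of tangency points
  have hZ : Z - A = (a / (a + b)) • u :=
    point_on_seg A B Z a b ha hb hZA hZB hAB
  have hY : Y - A = (a / (a + c)) • v :=
    point_on_seg A C Y a c ha hc hYA hYC hAC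
  have hXseg : X - B = (b / (b + c)) • (C - B) :=
    point_on_seg B C X b c hb hc hXB hXC hBC
  have hX : X - A = (1 - b / (b + c)) • u + (b / (b + c)) • v := by
    have hCB : C - B = v - u := by rw [hu, hv]; abel
    have : X - A = (X - B) + u := by rw [hu]; abel
    rw [this, hXseg, hCB]; module
  -- the incenter
  set I : EuclideanSpace ℝ (Fin 2) :=
    A + ((a + c) / (2 * p)) • u + ((a + b) / (2 * p)) • v with hI
  have hIA : I - A = ((a + c) / (2 * p)) • u + ((a + b) / (2 * p)) • v := by
    rw [hI]; abel
  have hIZ : I - Z = ((a + c) / (2 * p) - a / (a + b)) • u + ((a + b) / (2 * p)) • v := by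
    have : I - Z = (I - A) - (Z - A) := by abel
    rw [this, hIA, hZ]; module
  have hIY : I - Y = ((a + c) / (2 * p)) • u + ((a + b) / (2 * p) - a / (a + c)) • v := by
    have : I - Y = (I - A) - (Y - A) := by abel
    rw [this, hIA, hY]; module
  have hIX : I - X = ((a + c) / (2 * p) - (1 - b / (b + c))) • u
      + ((a + b) / (2 * p) - b / (b + c)) • v := by
    have : I - X = (I - A) - (X - A) := by abel
    rw [this, hIA, hX]; module
  refine ⟨I, Real.sqrt (a * b * c / p), Real.sqrt_pos.mpr (by positivity), ?_, ?_, ?_, ?_, ?_, ?_⟩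
  -- squared distances
  · have hsq : ⟪I - X, I - X⟫ = a * b * c / p := by
      rw [hIX, inner_comb, huu, hvv, huv]
      field_simp
      ring
    rw [dist_eq_norm, ← Real.sqrt_sq (norm_nonneg (I - X)), ← real_inner_self_eq_norm_sq, hsq]
  · have hsq : ⟪I - Y, I - Y⟫ = a * b * c / p := by
      rw [hIY, inner_comb, huu, hvv, huv]
      field_simp
      ring
    rw [dist_eq_norm, ← Real.sqrt_sq (norm_nonneg (I - Y)), ← real_inner_self_eq_norm_sq, hsq]
  · have hsq : ⟪I - Z, I - Z⟫ = a * b * c / p := by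
      rw [hIZ, inner_comb, huu, hvv, huv]
      field_simp
      ring
    rw [dist_eq_norm, ← Real.sqrt_sq (norm_nonneg (I - Z)), ← real_inner_self_eq_norm_sq, hsq]
  -- orthogonality
  · rw [hIZ, inner_comb_u, huu, huv]
    field_simp
    ring
  · have hCB : C - B = v - u := by rw [hu, hv]; abel
    rw [hCB, hIX, inner_comb_vu, huu, huv, hvv]
    field_simp
    ring
  · rw [hIY, inner_comb_v, huv, hvv]
    field_simp
    ring
end

section
/- In a three-circle configuration, let B' be a point lying both on the line through X and Z and on the line through A and C. Then the inversion of the plane with center B' and radius dist B' Y sends X to Z. -/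
open EuclideanGeometry

set_option linter.unnecessarySeqFocus false

set_option maxHeartbeats 1000000 in
/-- In a three-circle configuration, the inversion centered at
`B' = XZ ∩ AC` with radius `dist B' Y` sends `X` to `Z`. -/
theorem inversion_sends_X_to_Z
    (A B C X Y Z B' : EuclideanSpace ℝ (Fin 2)) (a b c : ℝ)
    (ha : 0 < a) (hb : 0 < b) (hc : 0 < c)
    (hAB : dist A B = a + b) (hBC : dist B C = b + c) (hAC : dist A C = a + c)
    (hZA : dist A Z = a) (hZB : dist B Z = b)
    (hXB : dist B X = b) (hXC : dist C X = c)
    (hYA : dist A Y = a) (hYC : dist C Y = c)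
    (hB'XZ : B' ∈ line[ℝ, X, Z]) (hB'AC : B' ∈ line[ℝ, A, C]) :
    EuclideanGeometry.inversion B' (dist B' Y) X = Z := by
  have hab : (0:ℝ) < a + b := by linarith
  have hbc : (0:ℝ) < b + c := by linarith
  have hac : (0:ℝ) < a + c := by linarith
  -- point formulas
  have hZf : Z = AffineMap.lineMap A B (a/(a+b)) := by
    refine eq_lineMap_of_dist_eq_mul_of_dist_eq_mul ?_ ?_
    · rw [hZA, hAB]; field_simp
    · rw [dist_comm Z B, hZB, hAB]; field_simp; ring
  have hXf : X = AffineMap.lineMap B C (b/(b+c)) := by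
    refine eq_lineMap_of_dist_eq_mul_of_dist_eq_mul ?_ ?_
    · rw [hXB, hBC]; field_simp
    · rw [dist_comm X C, hXC, hBC]; field_simp; ring
  have hYf : Y = AffineMap.lineMap A C (a/(a+c)) := by
    refine eq_lineMap_of_dist_eq_mul_of_dist_eq_mul ?_ ?_
    · rw [hYA, hAC]; field_simp
    · rw [dist_comm Y C, hYC, hAC]; field_simp; ring
  have hZ' : Z = (a/(a+b)) • (B - A) + A := by
    rw [hZf, AffineMap.lineMap_apply]; simp [vsub_eq_sub, vadd_eq_add]
  have hX' : X = (b/(b+c)) • (C - B) + B := by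
    rw [hXf, AffineMap.lineMap_apply]; simp [vsub_eq_sub, vadd_eq_add]
  have hY' : Y = (a/(a+c)) • (C - A) + A := by
    rw [hYf, AffineMap.lineMap_apply]; simp [vsub_eq_sub, vadd_eq_add]
  -- abstract difference vectors
  obtain ⟨v, hv⟩ : ∃ v, B - A = v := ⟨_, rfl⟩
  obtain ⟨w, hw⟩ : ∃ w, C - A = w := ⟨_, rfl⟩
  -- inner product facts
  have hV : (inner ℝ v v : ℝ) = (a+b)^2 := by
    rw [← hv, real_inner_self_eq_norm_sq, ← dist_eq_norm, dist_comm, hAB]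
  have hW : (inner ℝ w w : ℝ) = (a+c)^2 := by
    rw [← hw, real_inner_self_eq_norm_sq, ← dist_eq_norm, dist_comm, hAC]
  have hP : (inner ℝ v w : ℝ) = a^2 + a*b + a*c - b*c := by
    have h1 : ‖v - w‖^2 = (b+c)^2 := by
      have h0 : v - w = B - C := by rw [← hv, ← hw]; abel
      rw [h0, ← dist_eq_norm, hBC]
    have h2 := norm_sub_sq_real v w
    rw [← real_inner_self_eq_norm_sq, ← real_inner_self_eq_norm_sq,
      ← real_inner_self_eq_norm_sq, hV, hW] at h2
    rw [← real_inner_self_eq_norm_sq, h2] at h1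
    linarith
  have hP' : (inner ℝ w v : ℝ) = a^2 + a*b + a*c - b*c := by
    rw [real_inner_comm]; exact hP
  -- line memberships
  obtain ⟨s, hs⟩ := vadd_left_mem_affineSpan_pair.mp
    (show (B' -ᵥ X) +ᵥ X ∈ line[ℝ, X, Z] by rwa [vsub_vadd])
  obtain ⟨t, ht⟩ := vadd_left_mem_affineSpan_pair.mp
    (show (B' -ᵥ A) +ᵥ A ∈ line[ℝ, A, C] by rwa [vsub_vadd])
  rw [vsub_eq_sub, vsub_eq_sub] at hs ht
  rw [hw] at ht
  -- combine line conditions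
  have key : s • (Z - X) + (X - A) - t • w = 0 := by
    rw [hs, ht]; abel
  have e : s • (Z - X) + (X - A) - t • w
      = (c/(b+c) + s*(a/(a+b) - c/(b+c))) • v
        + ((1-s)*(b/(b+c)) - t) • w := by
    rw [hZ', hX', ← hv, ← hw]
    match_scalars <;> field_simp <;> ring
  have keyv : (c/(b+c) + s*(a/(a+b) - c/(b+c))) • v
      + ((1-s)*(b/(b+c)) - t) • w = (0 : EuclideanSpace ℝ (Fin 2)) :=
    e.symm.trans key
  have E1 : (c/(b+c) + s*(a/(a+b) - c/(b+c))) * ((a+b)^2)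
      + ((1-s)*(b/(b+c)) - t) * (a^2+a*b+a*c-b*c) = 0 := by
    have h := congrArg (fun y => (inner ℝ v y : ℝ)) keyv
    simpa only [inner_add_right, real_inner_smul_right, inner_zero_right, hV, hP] using h
  have E2 : (c/(b+c) + s*(a/(a+b) - c/(b+c))) * (a^2+a*b+a*c-b*c)
      + ((1-s)*(b/(b+c)) - t) * ((a+c)^2) = 0 := by
    have h := congrArg (fun y => (inner ℝ y w : ℝ)) keyv
    simpa only [inner_add_left, real_inner_smul_left, inner_zero_left, hW, hP] using h
  have hM0 : c/(b+c) + s*(a/(a+b) - c/(b+c)) = 0 := by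
    have h0 : (c/(b+c) + s*(a/(a+b) - c/(b+c))) * (4*a*b*c*(a+b+c)) = 0 := by
      linear_combination (a+c)^2 * E1 - (a^2+a*b+a*c-b*c) * E2
    have hpos : (4*a*b*c*(a+b+c)) ≠ 0 := by positivity
    exact (mul_eq_zero.mp h0).resolve_right hpos
  have hN0 : (1-s)*(b/(b+c)) - t = 0 := by
    have h0 : ((1-s)*(b/(b+c)) - t) * ((a+c)^2) = 0 := by
      linear_combination E2 - (a^2+a*b+a*c-b*c) * hM0
    exact (mul_eq_zero.mp h0).resolve_right (by positivity)
  have hMs : c*(a+b) + s*(b*(a-c)) = 0 := by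
    have h := hM0
    field_simp at h
    have h2 : (c*(a+b) + s*(b*(a-c))) * (b+c) = 0 := by linear_combination (b+c) * h
    exact (mul_eq_zero.mp h2).resolve_right hbc.ne'
  -- a ≠ c, explicit values of s and t
  have hca : c - a ≠ 0 := by
    intro h
    have hac' : a = c := by linarith
    rw [hac'] at hMs
    have h2 : c * (c + b) = 0 := by linear_combination hMs
    exact absurd h2 (by positivity)
  have hsv : s = c*(a+b)/(b*(c-a)) := by
    rw [eq_div_iff (by exact mul_ne_zero hb.ne' hca)]
    linarith [hMs]
  have htv : t = (1-s)*(b/(b+c)) := by linarith [hN0]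
  have hs0 : s ≠ 0 := by
    intro h
    rw [h] at hMs
    have h2 : c * (a + b) = 0 := by linear_combination hMs
    exact absurd h2 (by positivity)
  -- geometry of the three points relative to B'
  have hZX : Z - X = (a/(a+b) - c/(b+c)) • v - (b/(b+c)) • w := by
    rw [hZ', hX', ← hv, ← hw]
    match_scalars <;> field_simp <;> ring
  have hq : (inner ℝ (Z - X) (Z - X) : ℝ) = 4*a*b^2*c/((a+b)*(b+c)) := by
    rw [hZX]
    simp only [inner_sub_left, inner_sub_right, real_inner_smul_left, real_inner_smul_right,
      hV, hW, hP, hP']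
    field_simp
    ring
  have hXB' : X - B' = (-s) • (Z - X) := by
    have h1 : X - B' = -(B' - X) := by abel
    rw [h1, ← hs, neg_smul]
  have hZB' : Z - B' = (1-s) • (Z - X) := by
    have h1 : Z - B' = (Z - X) - (B' - X) := by abel
    rw [h1, ← hs, sub_smul, one_smul]
  have hdX2 : dist X B' ^ 2 = s^2 * (4*a*b^2*c/((a+b)*(b+c))) := by
    rw [dist_eq_norm, ← real_inner_self_eq_norm_sq, hXB']
    simp only [real_inner_smul_left, real_inner_smul_right, hq]
    ring
  have hB'e : B' = t • w + A := by rw [ht]; abel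
  have hBY : B' - Y = (t - a/(a+c)) • w := by
    rw [hB'e, hY', ← hw, sub_smul]
    abel
  have hdY2 : dist B' Y ^ 2 = (t - a/(a+c))^2 * (a+c)^2 := by
    rw [dist_eq_norm, ← real_inner_self_eq_norm_sq, hBY]
    simp only [real_inner_smul_left, real_inner_smul_right, hW]
    ring
  have hdX0 : dist X B' ≠ 0 := by
    intro h
    rw [h] at hdX2
    have h1 : (0:ℝ) < s^2 := lt_of_le_of_ne (sq_nonneg s) (Ne.symm (pow_ne_zero 2 hs0))
    have h2 : (0:ℝ) < 4*a*b^2*c/((a+b)*(b+c)) := by positivity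
    have h3 : s^2 * (4*a*b^2*c/((a+b)*(b+c))) = 0 := by rw [← hdX2]; norm_num
    exact absurd h3 (mul_pos h1 h2).ne'
  -- the key scalar identity
  have ht2 : t = a/(a-c) := by
    have h1 : a - c ≠ 0 := fun h => hca (by linarith)
    rw [htv, hsv]
    field_simp
    ring
  have hdY2' : dist B' Y ^ 2 = 4*a^2*c^2/((a-c)^2) := by
    have h1 : a - c ≠ 0 := fun h => hca (by linarith)
    rw [hdY2, ht2]
    field_simp
    ring
  have hdX2' : dist X B' ^ 2 = 4*a*c^3*(a+b)/((c-a)^2*(b+c)) := by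
    rw [hdX2, hsv]
    field_simp
  have hkey : dist B' Y ^ 2 * (-s) = (1-s) * (dist X B' ^ 2) := by
    have h1 : a - c ≠ 0 := fun h => hca (by linarith)
    rw [hdY2', hdX2', hsv]
    field_simp
    ring
  have hk : (dist B' Y / dist X B')^2 * (-s) = 1 - s := by
    rw [div_pow, div_mul_eq_mul_div, div_eq_iff (pow_ne_zero 2 hdX0)]
    linear_combination hkey
  -- conclude
  show (dist B' Y / dist X B')^2 • (X -ᵥ B') +ᵥ B' = Z
  rw [vsub_eq_sub, vadd_eq_add, hXB', smul_smul, hk, ← hZB']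
  abel
end

section
/- In a three-circle configuration, let B' be a point lying both on the line through X and Z and on the line through A and C. Then the inversion with center B' and radius dist B' Y maps the circle centered at A with radius a onto the circle centered at C with radius c (the image of the sphere of center A and radius a under the inversion equals the sphere of center C and radius c). -/
open EuclideanGeometry RealInnerProductSpace

set_option maxHeartbeats 1000000

variable {E : Type*} [NormedAddCommGroup E] [InnerProductSpace ℝ E]

/-- Tangency point of two externally tangent circles, as a vector identity. -/
lemma tangent_vec (A B Z : E) (a b : ℝ) (ha : 0 < a) (hb : 0 < b)
    (hAB : dist A B = a + b) (hZA : dist A Z = a) (hZB : dist B Z = b) :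
    (a + b) • (Z - A) = a • (B - A) := by
  have hp : ‖Z - A‖ = a := by rw [← dist_eq_norm, dist_comm]; exact hZA
  have hq : ‖B - Z‖ = b := by rw [← dist_eq_norm]; exact hZB
  have hpq : ‖(Z - A) + (B - Z)‖ = a + b := by
    rw [show (Z - A) + (B - Z) = B - A by abel, ← dist_eq_norm, dist_comm]; exact hAB
  have hinner : (inner ℝ (Z - A) (B - Z) : ℝ) = a * b := by
    have h := norm_add_sq_real (Z - A) (B - Z)
    rw [hp, hq, hpq] at h; nlinarith
  have heq : ‖B - Z‖ • (Z - A) = ‖Z - A‖ • (B - Z) :=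
    inner_eq_norm_mul_iff_real.mp (by rw [hp, hq]; exact hinner)
  rw [hp, hq] at heq
  have : (a + b) • (Z - A) = a • (Z - A) + b • (Z - A) := by module
  rw [this, heq]
  module

lemma noncollinear_of_dist (A B C : E) (a b c : ℝ) (ha : 0 < a) (hb : 0 < b) (hc : 0 < c)
    (hAB : dist A B = a + b) (hBC : dist B C = b + c) (hAC : dist A C = a + c) :
    ¬ Collinear ℝ ({A, B, C} : Set E) := by
  intro h
  rcases h.wbtw_or_wbtw_or_wbtw with h1 | h1 | h1
  · have := dist_add_dist_eq_iff.mpr h1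
    rw [hAB, hBC, hAC] at this; linarith
  · have := dist_add_dist_eq_iff.mpr h1
    rw [hBC, dist_comm C A, hAC, dist_comm B A, hAB] at this; linarith
  · have := dist_add_dist_eq_iff.mpr h1
    rw [dist_comm C A, hAC, hAB, dist_comm C B, hBC] at this; linarith

lemma smul_eq_smul_zero {A B C : E} (h : ¬ Collinear ℝ ({A, B, C} : Set E))
    (hCA : C ≠ A) {s t : ℝ} (hst : s • (B - A) = t • (C - A)) : s = 0 ∧ t = 0 := by
  have hs : s = 0 := by
    by_contra hs
    apply h
    have hBA : B - A = (s⁻¹ * t) • (C - A) := by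
      rw [mul_smul, ← hst, smul_smul, inv_mul_cancel₀ hs, one_smul]
    have hmem : B ∈ line[ℝ, A, C] := by
      have : B = (B - A) +ᵥ A := by simp
      rw [this, vadd_left_mem_affineSpan_pair]
      exact ⟨s⁻¹ * t, by rw [vsub_eq_sub]; exact hBA.symm⟩
    have := collinear_insert_of_mem_affineSpan_pair hmem
    rwa [Set.insert_comm] at this
  refine ⟨hs, ?_⟩
  rw [hs, zero_smul] at hst
  rcases smul_eq_zero.mp hst.symm with h0 | h0
  · exact h0
  · exact absurd (sub_eq_zero.mp h0) hCA

/-- Key computation: the inversion centered at `B'` with radius `dist B' Y`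
sends the sphere around `A` into the sphere around `C`. -/
lemma aux_inversion (A C Y B' : E) (a c : ℝ) (ha : 0 < a) (hc : 0 < c)
    (hac : a ≠ c) (hAC : dist A C = a + c)
    (hY : (a + c) • (Y - A) = a • (C - A))
    (hB' : (a - c) • (B' - A) = a • (C - A))
    (P : E) (hP : dist A P = a) :
    dist C (EuclideanGeometry.inversion B' (dist B' Y) P) = c := by
  have hacne : a - c ≠ 0 := sub_ne_zero.mpr hac
  have hacp : (0:ℝ) < a + c := by linarith
  have hacp' : a + c ≠ 0 := ne_of_gt hacp
  set e := C - A with he_def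
  have he : ‖e‖ = a + c := by
    rw [he_def, ← dist_eq_norm, dist_comm]; exact hAC
  have habs : |a - c| < a + c := abs_sub_lt_iff.mpr ⟨by linarith, by linarith⟩
  have habs0 : (0:ℝ) < |a - c| := abs_pos.mpr hacne
  -- P ≠ B'
  have hB'A : |a - c| * ‖B' - A‖ = a * (a + c) := by
    have h1 : ‖(a - c) • (B' - A)‖ = ‖a • e‖ := by rw [hB']
    rw [norm_smul, norm_smul, he, Real.norm_eq_abs, Real.norm_eq_abs, abs_of_pos ha] at h1
    exact h1
  have hPB' : P ≠ B' := by
    intro hPB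
    have h2 : ‖B' - A‖ = a := by
      rw [← dist_eq_norm, dist_comm, ← hPB]; exact hP
    rw [h2] at hB'A
    nlinarith
  set w := P - B' with hw_def
  have hwne : w ≠ 0 := sub_ne_zero.mpr hPB'
  have hd0 : ‖w‖ ≠ 0 := norm_ne_zero_iff.mpr hwne
  -- the constraint from P being on the sphere around A
  have hPA2 : (a - c) • (P - A) = (a - c) • w + a • e := by
    rw [show P - A = (P - B') + (B' - A) by abel, smul_add, hB', hw_def]
  have hcon2 : (a-c)^2*‖w‖^2 + 2*(a*(a-c))*(inner ℝ w e : ℝ) + a^2*(a+c)^2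
      = a^2*(a-c)^2 := by
    have h1 : ‖(a - c) • (P - A)‖ = |a - c| * a := by
      rw [norm_smul, Real.norm_eq_abs, ← dist_eq_norm, dist_comm, hP]
    have h2 := norm_add_sq_real ((a - c) • w) (a • e)
    rw [← hPA2, h1, real_inner_smul_left, real_inner_smul_right, norm_smul, norm_smul,
      he, Real.norm_eq_abs, Real.norm_eq_abs] at h2
    have h3 : (|a - c| * a)^2 = (a-c)^2 * a^2 := by
      rw [mul_pow, sq_abs]
    have h4 : (|a - c| * ‖w‖)^2 = (a-c)^2 * ‖w‖^2 := by
      rw [mul_pow, sq_abs]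
    have h5 : (|a| * (a+c))^2 = a^2 * (a+c)^2 := by
      rw [mul_pow, sq_abs]
    rw [h3, h4, h5] at h2
    nlinarith [h2]
  -- the radius squared
  have hBY2 : ((a+c)*(a-c)) • (B' - Y) = (2*a*c) • e := by
    have h1 : ((a+c)*(a-c)) • (B' - Y)
        = (a+c) • ((a-c) • (B' - A)) - (a-c) • ((a+c) • (Y - A)) := by
      module
    rw [h1, hB', hY, smul_smul, smul_smul, ← sub_smul]
    congr 1
    ring
  have hR2 : (dist B' Y)^2 = 4*a^2*c^2/(a-c)^2 := by
    have h1 : ‖((a+c)*(a-c)) • (B' - Y)‖ = ‖(2*a*c) • e‖ := by rw [hBY2]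
    rw [norm_smul, norm_smul, he, Real.norm_eq_abs, Real.norm_eq_abs] at h1
    have h2 := congrArg (· ^ 2) h1
    simp only [mul_pow, sq_abs] at h2
    have h3 : ‖B' - Y‖ = dist B' Y := (dist_eq_norm B' Y).symm
    rw [h3] at h2
    have h5 := mul_left_cancel₀ (show ((a+c)^2 : ℝ) ≠ 0 by positivity)
      (show ((a+c)^2 : ℝ) * (dist B' Y ^2*(a-c)^2) = (a+c)^2 * (4*a^2*c^2) by
        linear_combination h2)
    rw [eq_div_iff (pow_ne_zero 2 hacne)]
    linear_combination h5
  -- the vector from B' to C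
  have hB'C : (a - c) • (B' - C) = c • e := by
    have h1 : (a - c) • (B' - C) = (a - c) • (B' - A) - (a - c) • e := by
      rw [he_def]; module
    rw [h1, hB', ← sub_smul]
    congr 1
    ring
  have hK : ‖B' - C‖^2 = c^2*(a+c)^2/(a-c)^2 := by
    have h1 : ‖(a - c) • (B' - C)‖ = ‖c • e‖ := by rw [hB'C]
    rw [norm_smul, norm_smul, he, Real.norm_eq_abs, Real.norm_eq_abs] at h1
    have h2 := congrArg (· ^ 2) h1
    simp only [mul_pow, sq_abs] at h2
    field_simp
    linear_combination h2
  have hJ : (inner ℝ w (B' - C) : ℝ) = c * (inner ℝ w e : ℝ) / (a - c) := by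
    have h1 : (inner ℝ w ((a-c) • (B' - C)) : ℝ) = (inner ℝ w (c • e) : ℝ) := by rw [hB'C]
    rw [real_inner_smul_right, real_inner_smul_right] at h1
    field_simp
    linear_combination h1
  have hI : (inner ℝ w e : ℝ)
      = (a^2*(a-c)^2 - a^2*(a+c)^2 - (a-c)^2*‖w‖^2) / (2*a*(a-c)) := by
    rw [eq_div_iff (by positivity : (2:ℝ)*a*(a-c) ≠ 0  )]
    linear_combination hcon2
  -- unfold the inversion
  have hinv : EuclideanGeometry.inversion B' (dist B' Y) P
      = (dist B' Y / ‖w‖)^2 • w + B' := by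
    rw [EuclideanGeometry.inversion]
    rw [show dist P B' = ‖w‖ from by rw [hw_def, dist_eq_norm]]
    simp only [vsub_eq_sub, vadd_eq_add, hw_def]
  rw [hinv]
  have hnorm : dist C ((dist B' Y / ‖w‖)^2 • w + B')
      = ‖(dist B' Y / ‖w‖)^2 • w + (B' - C)‖ := by
    rw [dist_comm, dist_eq_norm]
    congr 1
    abel
  rw [hnorm]
  have hsq := norm_add_sq_real ((dist B' Y / ‖w‖)^2 • w) (B' - C)
  rw [real_inner_smul_left, norm_smul, Real.norm_eq_abs] at hsq
  have hfin : ‖(dist B' Y / ‖w‖)^2 • w + (B' - C)‖ ^ 2 = c^2 := by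
    rw [hsq, mul_pow, sq_abs, div_pow, hR2, hJ, hI, hK]
    field_simp
    ring
  have hnn := norm_nonneg ((dist B' Y / ‖w‖)^2 • w + (B' - C))
  nlinarith [hfin, hnn]

/-- In a three-circle configuration, the inversion centered at
`B' = XZ ∩ AC` with radius `dist B' Y` maps circle `O_A` onto circle `O_C`. -/
theorem inversion_maps_OA_to_OC
    (A B C X Y Z B' : EuclideanSpace ℝ (Fin 2)) (a b c : ℝ)
    (ha : 0 < a) (hb : 0 < b) (hc : 0 < c)
    (hAB : dist A B = a + b) (hBC : dist B C = b + c) (hAC : dist A C = a + c)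
    (hZA : dist A Z = a) (hZB : dist B Z = b)
    (hXB : dist B X = b) (hXC : dist C X = c)
    (hYA : dist A Y = a) (hYC : dist C Y = c)
    (hB'XZ : B' ∈ line[ℝ, X, Z]) (hB'AC : B' ∈ line[ℝ, A, C]) :
    EuclideanGeometry.inversion B' (dist B' Y) '' Metric.sphere A a =
      Metric.sphere C c := by
  have hZ := tangent_vec A B Z a b ha hb hAB hZA hZB
  have hX := tangent_vec B C X b c hb hc hBC hXB hXC
  have hY := tangent_vec A C Y a c ha hc hAC hYA hYC
  have hnc := noncollinear_of_dist A B C a b c ha hb hc hAB hBC hAC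
  have hCA : C ≠ A := by
    intro h
    rw [h, dist_self] at hAC; linarith
  -- extract parameters from the line memberships
  obtain ⟨r, hr⟩ : ∃ r : ℝ, r • (C - A) = B' - A := by
    have h1 : B' = (B' - A) +ᵥ A := by simp
    rw [h1, vadd_left_mem_affineSpan_pair] at hB'AC
    obtain ⟨r, hr⟩ := hB'AC
    exact ⟨r, by rw [← vsub_eq_sub (C : EuclideanSpace ℝ (Fin 2)) A]; exact hr⟩
  obtain ⟨v, hv⟩ : ∃ v : ℝ, v • (Z - X) = B' - X := by
    have h1 : B' = (B' - X) +ᵥ X := by simp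
    rw [h1, vadd_left_mem_affineSpan_pair] at hB'XZ
    obtain ⟨v, hv⟩ := hB'XZ
    exact ⟨v, by rw [← vsub_eq_sub (Z : EuclideanSpace ℝ (Fin 2)) X]; exact hv⟩
  have hab0 : a + b ≠ 0 := by positivity
  have hbc0 : b + c ≠ 0 := by positivity
  have key : (c*(a+b) + v*(a*(b+c) - c*(a+b))) • (B - A)
      = ((a+b)*(b+c)*r - (1-v)*b*(a+b)) • (C - A) := by
    linear_combination (norm := module) (-((a+b)*(b+c))) • hr + ((a+b)*(b+c)) • hv
      - (v*(b+c)) • hZ - ((1-v)*(a+b)) • hX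
  obtain ⟨hs, ht⟩ := smul_eq_smul_zero hnc hCA key
  have hac : a ≠ c := by
    intro h
    rw [h] at hs
    ring_nf at hs
    nlinarith
  have ht' : (b+c)*r - (1-v)*b = 0 := by
    rcases mul_eq_zero.mp (show (a+b)*((b+c)*r - (1-v)*b) = 0 by linear_combination ht) with h | h
    · exact absurd h hab0
    · exact h
  have hrval : r * (a - c) = a := by
    have h1 : (b+c)*(r*(a-c)) = (b+c)*a := by linear_combination (a-c) * ht' - hs
    have := mul_left_cancel₀ hbc0 h1
    linarith [this]
  have hB'vec : (a - c) • (B' - A) = a • (C - A) := by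
    rw [← hr, smul_smul]
    rw [show (a-c)*r = a by linarith [hrval, mul_comm r (a-c)]]
  have hB'vec' : (c - a) • (B' - C) = c • (A - C) := by
    rw [show B' - C = (B' - A) - (C - A) by abel, ← hr]
    rw [show A - C = -(C - A) by abel]
    rw [smul_sub, smul_smul, smul_neg, ← sub_smul, ← neg_smul]
    congr 1
    linear_combination -hrval
  have hYvec' : (c + a) • (Y - C) = c • (A - C) := by
    linear_combination (norm := module) hY
  have hRne : dist B' Y ≠ 0 := by
    rw [dist_ne_zero]
    intro hBY
    rw [hBY] at hB'vec
    have hsub : ((a - c) - (a + c)) • (Y - A) = 0 := by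
      rw [sub_smul, hB'vec, hY, sub_self]
    rw [show (a - c) - (a + c) = -(2*c) by ring] at hsub
    rcases smul_eq_zero.mp hsub with h | h
    · have : c = 0 := by linarith [neg_eq_zero.mp h]
      linarith
    · rw [sub_eq_zero] at h
      rw [h] at hY
      have : a • (C - A) = 0 := by rw [← hY, sub_self, smul_zero]
      rcases smul_eq_zero.mp this with h' | h'
      · linarith
      · exact hCA (sub_eq_zero.mp h')
  ext Q
  simp only [Set.mem_image, Metric.mem_sphere]
  constructor
  · rintro ⟨P, hP, rfl⟩
    rw [dist_comm]
    exact aux_inversion A C Y B' a c ha hc hac hAC hY hB'vec P (by rw [dist_comm]; exact hP)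
  · intro hQ
    refine ⟨EuclideanGeometry.inversion B' (dist B' Y) Q, ?_, ?_⟩
    · rw [dist_comm]
      exact aux_inversion C A Y B' c a hc ha (Ne.symm hac) (by rw [dist_comm]; linarith [hAC])
        hYvec' hB'vec' Q (by rw [dist_comm]; exact hQ)
    · exact EuclideanGeometry.inversion_inversion B' hRne Q
end

section
/- In a three-circle configuration, let B' be a point lying both on the line through X and Z and on the line through A and C. Then the inversion with center B' and radius dist B' Y maps the circle centered at B with radius b onto itself (the image of the sphere of center B and radius b under the inversion equals that same sphere). -/
open RealInnerProductSpace

variable {E : Type*} [NormedAddCommGroup E] [InnerProductSpace ℝ E]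

lemma distsq {x y : E} {d : ℝ} (h : dist x y = d) : ⟪x - y, x - y⟫ = d ^ 2 := by
  rw [real_inner_self_eq_norm_sq, ← dist_eq_norm, h]

lemma inner_expand (x y : E) : ⟪x - y, x - y⟫ = ⟪x, x⟫ - 2 * ⟪x, y⟫ + ⟪y, y⟫ := by
  rw [inner_sub_left, inner_sub_right, inner_sub_right, real_inner_comm x y]; ring

lemma between_of_dist {A B Z : E} {a b : ℝ} (ha : 0 < a) (hb : 0 < b)
    (hAB : dist A B = a + b) (hAZ : dist A Z = a) (hBZ : dist B Z = b) :
    Z - A = (a / (a + b)) • (B - A) := by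
  have hab : a + b ≠ 0 := by positivity
  have h1 : ⟪Z - A, Z - A⟫ = a ^ 2 := distsq (by rw [dist_comm]; exact hAZ)
  have h2 : ⟪B - A, B - A⟫ = (a + b) ^ 2 := distsq (by rw [dist_comm]; exact hAB)
  have h3 : ⟪Z - B, Z - B⟫ = b ^ 2 := distsq (by rw [dist_comm]; exact hBZ)
  have hZB : Z - B = (Z - A) - (B - A) := by abel
  rw [hZB, inner_expand] at h3
  have h4 : ⟪Z - A, B - A⟫ = a * (a + b) := by nlinarith
  have h5 : ⟪(Z - A) - (a / (a + b)) • (B - A), (Z - A) - (a / (a + b)) • (B - A)⟫ = 0 := by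
    rw [inner_expand, inner_smul_right, real_inner_smul_left, inner_smul_right, h1, h2, h4]
    field_simp
    ring
  exact sub_eq_zero.mp (inner_self_eq_zero.mp h5)

lemma inversion_fixes_sphere {O P : E} {r R : ℝ} (hr : 0 < r) (hR : 0 < R)
    (hpow : dist P O ^ 2 = r ^ 2 + R ^ 2) :
    EuclideanGeometry.inversion P R '' Metric.sphere O r = Metric.sphere O r := by
  have key : ∀ Q ∈ Metric.sphere O r, EuclideanGeometry.inversion P R Q ∈ Metric.sphere O r := by
    intro Q hQ
    have hQO : dist Q O = r := hQ
    have hQP : Q ≠ P := by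
      rintro rfl
      rw [hQO] at hpow
      have := pow_pos hR 2
      linarith
    have hd : 0 < dist Q P := dist_pos.mpr hQP
    set d := dist Q P with hdd
    have hQPi : ⟪Q - P, Q - P⟫ = d ^ 2 := distsq hdd.symm
    have hOPi : ⟪O - P, O - P⟫ = r ^ 2 + R ^ 2 := by
      rw [← hpow]; exact distsq (dist_comm O P)
    have hQOi : ⟪Q - O, Q - O⟫ = r ^ 2 := distsq hQO
    have hmix : ⟪Q - P, O - P⟫ = (d ^ 2 + R ^ 2) / 2 := by
      have h' : Q - O = (Q - P) - (O - P) := by abel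
      rw [h', inner_expand, hQPi, hOPi] at hQOi
      linarith
    have hsq : dist (EuclideanGeometry.inversion P R Q) O ^ 2 = r ^ 2 := by
      rw [EuclideanGeometry.inversion]
      simp only [vsub_eq_sub, vadd_eq_add]
      rw [dist_eq_norm, ← real_inner_self_eq_norm_sq]
      have hvec : (R / d) ^ 2 • (Q - P) + P - O = (R / d) ^ 2 • (Q - P) - (O - P) := by abel
      rw [← hdd, hvec, inner_expand, real_inner_smul_left, real_inner_smul_left, inner_smul_right,
        hQPi, hOPi, hmix]
      field_simp
      ring
    have : dist (EuclideanGeometry.inversion P R Q) O = Real.sqrt (r ^ 2) := by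
      rw [← hsq, Real.sqrt_sq dist_nonneg]
    rw [Metric.mem_sphere, this, Real.sqrt_sq hr.le]
  refine Set.Subset.antisymm ?_ ?_
  · rintro _ ⟨Q, hQ, rfl⟩; exact key Q hQ
  · intro Q hQ
    exact ⟨EuclideanGeometry.inversion P R Q, key Q hQ,
      EuclideanGeometry.inversion_inversion P hR.ne' Q⟩

set_option maxHeartbeats 1000000 in
/-- In a three-circle configuration, the inversion centered at
`B' = XZ ∩ AC` with radius `dist B' Y` maps circle `O_B` onto itself. -/
theorem inversion_fixes_OB
    (A B C X Y Z B' : EuclideanSpace ℝ (Fin 2)) (a b c : ℝ)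
    (ha : 0 < a) (hb : 0 < b) (hc : 0 < c)
    (hAB : dist A B = a + b) (hBC : dist B C = b + c) (hAC : dist A C = a + c)
    (hZA : dist A Z = a) (hZB : dist B Z = b)
    (hXB : dist B X = b) (hXC : dist C X = c)
    (hYA : dist A Y = a) (hYC : dist C Y = c)
    (hB'XZ : B' ∈ line[ℝ, X, Z]) (hB'AC : B' ∈ line[ℝ, A, C]) :
    EuclideanGeometry.inversion B' (dist B' Y) '' Metric.sphere B b =
      Metric.sphere B b := by
  have hab : (0:ℝ) < a + b := by positivity
  have hbc : (0:ℝ) < b + c := by positivity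
  have hac' : (0:ℝ) < a + c := by positivity
  -- explicit tangency points
  have hZ : Z - A = (a / (a + b)) • (B - A) := between_of_dist ha hb hAB hZA hZB
  have hX : X - B = (b / (b + c)) • (C - B) := between_of_dist hb hc hBC hXB hXC
  have hY : Y - A = (a / (a + c)) • (C - A) := between_of_dist ha hc hAC hYA hYC
  -- Gram data
  have hU : ⟪B - A, B - A⟫ = (a + b) ^ 2 := distsq (by rw [dist_comm]; exact hAB)
  have hV : ⟪C - A, C - A⟫ = (a + c) ^ 2 := distsq (by rw [dist_comm]; exact hAC)
  have hW : ⟪B - A, C - A⟫ = a ^ 2 + a * b + a * c - b * c := by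
    have h3 : ⟪C - B, C - B⟫ = (b + c) ^ 2 := distsq (by rw [dist_comm]; exact hBC)
    have h4 : C - B = (C - A) - (B - A) := by abel
    rw [h4, inner_expand, hV, hU, real_inner_comm] at h3
    nlinarith
  have hW' : ⟪C - A, B - A⟫ = a ^ 2 + a * b + a * c - b * c :=
    (real_inner_comm (B - A) (C - A)).trans hW
  -- parameters on the two lines
  obtain ⟨s, hs⟩ : ∃ s : ℝ, s • (Z - X) = B' - X := by
    have h := hB'XZ
    rw [show B' = (B' -ᵥ X) +ᵥ X from (vsub_vadd _ _).symm] at h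
    obtain ⟨s, hs⟩ := vadd_left_mem_affineSpan_pair.mp h
    exact ⟨s, by simpa [vsub_eq_sub] using hs⟩
  obtain ⟨t, ht⟩ : ∃ t : ℝ, t • (C - A) = B' - A := by
    have h := hB'AC
    rw [show B' = (B' -ᵥ A) +ᵥ A from (vsub_vadd _ _).symm] at h
    obtain ⟨t, ht⟩ := vadd_left_mem_affineSpan_pair.mp h
    exact ⟨t, by simpa [vsub_eq_sub] using ht⟩
  -- B' in the u,v frame
  set p : ℝ := 1 - b / (b + c) + s * (a / (a + b) - 1 + b / (b + c)) with hp
  set q : ℝ := (b / (b + c)) * (1 - s) with hq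
  have hXA : X - A = (b / (b + c)) • ((C - A) - (B - A)) + (B - A) := by
    have h2 : X - A = (X - B) + (B - A) := by abel
    have h3 : C - B = (C - A) - (B - A) := by abel
    rw [h2, hX, h3]
  have hZX : Z - X = (a / (a + b)) • (B - A) -
      ((b / (b + c)) • ((C - A) - (B - A)) + (B - A)) := by
    have h2 : Z - X = (Z - A) - (X - A) := by abel
    rw [h2, hZ, hXA]
  have hw : B' - A = p • (B - A) + q • (C - A) := by
    have h1 : B' - A = s • (Z - X) + (X - A) := by rw [hs]; abel
    rw [h1, hZX, hXA, hp, hq]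
    module
  -- scalar equations
  have e1 : ⟪B' - A, B - A⟫ = t * (a ^ 2 + a * b + a * c - b * c) := by
    rw [← ht, real_inner_smul_left, hW']
  have e2 : ⟪B' - A, B - A⟫ = p * (a + b) ^ 2 + q * (a ^ 2 + a * b + a * c - b * c) := by
    rw [hw, inner_add_left, real_inner_smul_left, real_inner_smul_left, hU, hW']
  have e3 : ⟪B' - A, C - A⟫ = t * (a + c) ^ 2 := by
    rw [← ht, real_inner_smul_left, hV]
  have e4 : ⟪B' - A, C - A⟫ = p * (a ^ 2 + a * b + a * c - b * c) + q * (a + c) ^ 2 := by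
    rw [hw, inner_add_left, real_inner_smul_left, real_inner_smul_left, hW, hV]
  have h12 : p * (a + b) ^ 2 + q * (a ^ 2 + a * b + a * c - b * c)
      = t * (a ^ 2 + a * b + a * c - b * c) := e2.symm.trans e1
  have h34 : p * (a ^ 2 + a * b + a * c - b * c) + q * (a + c) ^ 2
      = t * (a + c) ^ 2 := e4.symm.trans e3
  have hkey : p * (4 * a * b * c * (a + b + c)) = 0 := by
    linear_combination (a + c) ^ 2 * h12 - (a ^ 2 + a * b + a * c - b * c) * h34
  have hp0 : p = 0 := by
    have h4 : (0:ℝ) < 4 * a * b * c * (a + b + c) := by positivity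
    exact (mul_eq_zero.mp hkey).resolve_right h4.ne'
  have hP : c * (a + b) + s * (b * (a - c)) = 0 := by
    rw [hp] at hp0
    have h5 : (b + c) * (c * (a + b) + s * (b * (a - c))) = 0 := by
      field_simp at hp0
      linear_combination (b + c) * hp0
    exact (mul_eq_zero.mp h5).resolve_left hbc.ne'
  have hac : a ≠ c := by
    intro h
    subst h
    have h5 : a * (a + b) = 0 := by linear_combination hP
    have h6 : (0:ℝ) < a * (a + b) := by positivity
    exact h6.ne' h5
  have hacne : a - c ≠ 0 := sub_ne_zero.mpr hac
  have htq : t = q := by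
    rw [hp0] at h34
    have hV0 : ((a + c) ^ 2 : ℝ) ≠ 0 := by positivity
    have h6 : t * (a + c) ^ 2 = q * (a + c) ^ 2 := by linarith
    exact mul_right_cancel₀ hV0 h6
  have htval : t = a / (a - c) := by
    rw [htq, hq]
    field_simp
    linear_combination -hP
  -- final distance computations
  have hBYv : B' - Y = (t - a / (a + c)) • (C - A) := by
    have h7 : B' - Y = (B' - A) - (Y - A) := by abel
    rw [h7, ← ht, hY]
    module
  have hBY2 : dist B' Y ^ 2 = (t - a / (a + c)) ^ 2 * (a + c) ^ 2 := by
    rw [dist_eq_norm, ← real_inner_self_eq_norm_sq, hBYv, real_inner_smul_left,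
      real_inner_smul_right, hV]
    ring
  have hBBv : B' - B = t • (C - A) - (B - A) := by
    have h8 : B' - B = (B' - A) - (B - A) := by abel
    rw [h8, ← ht]
  have hBB2 : dist B' B ^ 2 = t ^ 2 * (a + c) ^ 2 - 2 * t * (a ^ 2 + a * b + a * c - b * c)
      + (a + b) ^ 2 := by
    rw [dist_eq_norm, ← real_inner_self_eq_norm_sq, hBBv, inner_expand, real_inner_smul_left,
      real_inner_smul_right, real_inner_smul_left, hV, hW', hU]
    ring
  have hpow : dist B' B ^ 2 = b ^ 2 + dist B' Y ^ 2 := by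
    rw [hBB2, hBY2, htval]
    field_simp
    ring
  have hBYval : dist B' Y ^ 2 = (2 * a * c / (a - c)) ^ 2 := by
    rw [hBY2, htval]
    field_simp
    ring
  have hRpos : 0 < dist B' Y := by
    have hne : (2 * a * c / (a - c)) ≠ 0 := div_ne_zero (by positivity) hacne
    have h9 : (0:ℝ) < (2 * a * c / (a - c)) ^ 2 :=
      lt_of_le_of_ne (sq_nonneg _) (Ne.symm (pow_ne_zero 2 hne))
    have h11 : 0 < dist B' Y ^ 2 := by rw [hBYval]; exact h9
    have hd0 : 0 ≤ dist B' Y := dist_nonneg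
    have h10 : dist B' Y ≠ 0 := by
      intro h0
      rw [h0] at h11
      norm_num at h11
    exact lt_of_le_of_ne hd0 (Ne.symm h10)
  exact inversion_fixes_sphere hb hRpos hpow
end

section
/- In a three-circle configuration, let B' be a point lying both on the line through X and Z and on the line through A and C. Then the circle centered at B' with radius dist B' Y is orthogonal to the circle centered at B with radius b, i.e., (dist B B')² = b² + (dist B' Y)². -/
open AffineMap

private lemma lineMap_vec (A B Z : EuclideanSpace ℝ (Fin 2)) (a b : ℝ) (hab : 0 < a + b)
    (hAB : dist A B = a + b) (hZA : dist A Z = a)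
    (hw : Wbtw ℝ A Z B) :
    Z - A = (a/(a+b)) • (B - A) := by
  obtain ⟨tZ, htZm, htZ⟩ := hw
  have ht : tZ = a / (a + b) := by
    have h1 : dist (lineMap A B tZ) A = ‖tZ‖ * dist A B := dist_lineMap_left A B tZ
    rw [htZ, dist_comm Z A, hZA, hAB, Real.norm_eq_abs, abs_of_nonneg htZm.1] at h1
    field_simp
    linarith
  have : Z = tZ • (B - A) + A := by
    rw [← htZ, lineMap_apply]
    simp [vsub_eq_sub, vadd_eq_add]
  rw [this, ht]
  abel

/-- In a three-circle configuration, the circle centered at `B' = XZ ∩ AC`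
with radius `dist B' Y` is orthogonal to the circle `O_B`. -/
theorem inversion_circle_orthogonal_to_OB
    (A B C X Y Z B' : EuclideanSpace ℝ (Fin 2)) (a b c : ℝ)
    (ha : 0 < a) (hb : 0 < b) (hc : 0 < c)
    (hAB : dist A B = a + b) (hBC : dist B C = b + c) (hAC : dist A C = a + c)
    (hZA : dist A Z = a) (hZB : dist B Z = b)
    (hXB : dist B X = b) (hXC : dist C X = c)
    (hYA : dist A Y = a) (hYC : dist C Y = c)
    (hB'XZ : B' ∈ line[ℝ, X, Z]) (hB'AC : B' ∈ line[ℝ, A, C]) :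
    (dist B B') ^ 2 = b ^ 2 + (dist B' Y) ^ 2 := by
  have hab : (0:ℝ) < a + b := by linarith
  have hbc : (0:ℝ) < b + c := by linarith
  have hac : (0:ℝ) < a + c := by linarith
  have hab' : (a:ℝ) + b ≠ 0 := hab.ne'
  have hbc' : (b:ℝ) + c ≠ 0 := hbc.ne'
  have hac' : (a:ℝ) + c ≠ 0 := hac.ne'
  -- betweenness
  have hZv : Z - A = (a/(a+b)) • (B - A) := by
    refine lineMap_vec A B Z a b hab hAB hZA ?_
    rw [← dist_add_dist_eq_iff, hZA, dist_comm Z B, hZB, hAB]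
  have hXv : X - B = (b/(b+c)) • (C - B) := by
    refine lineMap_vec B C X b c hbc hBC hXB ?_
    rw [← dist_add_dist_eq_iff, hXB, dist_comm X C, hXC, hBC]
  have hYv : Y - A = (a/(a+c)) • (C - A) := by
    refine lineMap_vec A C Y a c hac hAC hYA ?_
    rw [← dist_add_dist_eq_iff, hYA, dist_comm Y C, hYC, hAC]
  -- B' on the two lines
  obtain ⟨s, hs⟩ : ∃ s : ℝ, s • (C -ᵥ A) = B' -ᵥ A := by
    refine vadd_left_mem_affineSpan_pair.1 ?_
    rwa [vsub_vadd]
  obtain ⟨t, ht⟩ : ∃ t : ℝ, t • (Z -ᵥ X) = B' -ᵥ X := by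
    refine vadd_left_mem_affineSpan_pair.1 ?_
    rwa [vsub_vadd]
  simp only [vsub_eq_sub] at hs ht
  set u : EuclideanSpace ℝ (Fin 2) := B - A with hu
  set v : EuclideanSpace ℝ (Fin 2) := C - A with hv
  set α : ℝ := a/(a+b) with hα
  set β : ℝ := b/(b+c) with hβ
  -- key vector identity
  have e1 : B' - A = s • v := hs.symm
  have e2 : B' - X = t • (Z - X) := ht.symm
  have e3 : X - A = (1-β) • u + β • v := by
    have h1 : X - A = (X - B) + u := by rw [hu]; abel
    have h2 : C - B = v - u := by rw [hu, hv]; abel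
    rw [h1, hXv, h2]
    module
  have e4 : Z - X = (α - 1 + β) • u - β • v := by
    have h1 : Z - X = (Z - A) - (X - A) := by abel
    rw [h1, hZv, e3]
    module
  have key : (-(1-β) - t*(α-1+β)) • u + (s - β + t*β) • v = 0 := by
    have h1 : (-(1-β) - t*(α-1+β)) • u + (s - β + t*β) • v
        = s • v - ((1-β) • u + β • v) - t • ((α - 1 + β) • u - β • v) := by module
    rw [h1, ← e3, ← e4, ← e1, ← e2]
    abel
  -- inner products
  have hp : (inner ℝ u u : ℝ) = (a+b)^2 := by
    rw [real_inner_self_eq_norm_sq, hu, ← dist_eq_norm, dist_comm, hAB]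
  have hr : (inner ℝ v v : ℝ) = (a+c)^2 := by
    rw [real_inner_self_eq_norm_sq, hv, ← dist_eq_norm, dist_comm, hAC]
  have hq : (inner ℝ u v : ℝ) = ((a+b)^2 + (a+c)^2 - (b+c)^2)/2 := by
    have h1 : ‖u - v‖^2 = ‖u‖^2 - 2 * inner ℝ u v + ‖v‖^2 := norm_sub_sq_real u v
    have h2 : u - v = B - C := by rw [hu, hv]; abel
    rw [h2, ← dist_eq_norm, hBC] at h1
    rw [← real_inner_self_eq_norm_sq, ← real_inner_self_eq_norm_sq, hp, hr] at h1
    linarith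
  set μ : ℝ := -(1-β) - t*(α-1+β) with hμ
  set ν : ℝ := s - β + t*β with hν
  have e5 : μ * (inner ℝ u u : ℝ) + ν * (inner ℝ u v : ℝ) = 0 := by
    have h1 : (inner ℝ u (μ • u + ν • v) : ℝ) = 0 := by rw [key]; exact inner_zero_right u
    rwa [inner_add_right, real_inner_smul_right, real_inner_smul_right] at h1
  have e6 : μ * (inner ℝ v u : ℝ) + ν * (inner ℝ v v : ℝ) = 0 := by
    have h1 : (inner ℝ v (μ • u + ν • v) : ℝ) = 0 := by rw [key]; exact inner_zero_right v
    rwa [inner_add_right, real_inner_smul_right, real_inner_smul_right] at h1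
  rw [hp, hq] at e5
  rw [real_inner_comm u v, hq, hr] at e6
  -- deduce μ = 0 and ν = 0
  have hμ0 : μ = 0 := by
    have h3 : μ * (4*a*b*c*(a+b+c)) = 0 := by
      linear_combination (a+c)^2 * e5 - (((a+b)^2 + (a+c)^2 - (b+c)^2)/2) * e6
    have h4 : 4*a*b*c*(a+b+c) ≠ 0 := by positivity
    exact (mul_eq_zero.1 h3).resolve_right h4
  have hν0 : ν = 0 := by
    have h3 : ν * (a+c)^2 = 0 := by
      linear_combination e6 - ((a+b)^2 + (a+c)^2 - (b+c)^2)/2 * hμ0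
    have h4 : ((a:ℝ)+c)^2 ≠ 0 := by positivity
    exact (mul_eq_zero.1 h3).resolve_right h4
  -- scalar equations
  rw [hμ, hα, hβ] at hμ0
  rw [hν, hβ] at hν0
  have hμ0' : c*(a+b)*(1-t) + t*a*(b+c) = 0 := by
    field_simp at hμ0
    have h : (b+c) * (c*(a+b)*(1-t) + t*a*(b+c)) = 0 := by linear_combination -(b+c) * hμ0
    exact (mul_eq_zero.1 h).resolve_left hbc'
  have hν0' : s*(b+c) - b*(1-t) = 0 := by
    field_simp at hν0
    linear_combination hν0
  have hkey2 : s * (a - c) = a := by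
    have h4 : b*(b+c)*(a - s*(a-c)) = 0 := by
      linear_combination b * hμ0' + (c*(a+b) - a*(b+c)) * hν0'
    have h5 : b*(b+c) ≠ 0 := by positivity
    have h6 := (mul_eq_zero.1 h4).resolve_left h5
    linarith
  -- final computation
  have hBB' : B - B' = u - s • v := by
    rw [hs, hu]; abel
  have hB'Y : B' - Y = (s - a/(a+c)) • v := by
    rw [sub_smul, hs, ← hYv]; abel
  have g1 : dist B B' ^ 2 = (a+b)^2 - 2*s*(((a+b)^2 + (a+c)^2 - (b+c)^2)/2) + s^2*(a+c)^2 := by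
    rw [dist_eq_norm, ← real_inner_self_eq_norm_sq, hBB']
    simp only [inner_sub_sub_self, real_inner_smul_left, real_inner_smul_right,
      real_inner_comm u v, hp, hq, hr]
    ring
  have g2 : dist B' Y ^ 2 = (s*(a+c) - a)^2 := by
    rw [dist_eq_norm, ← real_inner_self_eq_norm_sq, hB'Y]
    simp only [real_inner_smul_left, real_inner_smul_right, hr]
    field_simp
  rw [g1, g2]
  linear_combination (-2*b) * hkey2
end

section
/- In a three-circle configuration, suppose P is a point and r > 0 is such that the inversion with center P and radius r maps the circle centered at A with radius a onto the circle centered at C with radius c, and maps the circle centered at B with radius b onto itself. Then P lies on the line through A and C, P lies on the line through X and Z, and r = dist P Y (the inversion circle swapping O_A and O_C while fixing O_B is unique). -/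
set_option maxHeartbeats 1000000

open EuclideanGeometry Metric Real RealInnerProductSpace

section AuxLemmas
variable {F : Type*} [NormedAddCommGroup F] [InnerProductSpace ℝ F]

lemma aux_not_center_gen (P O D : F) (ρ d r : ℝ)
    (hρ : 0 < ρ) (hd : 0 < d) (hr : 0 < r)
    (w : F) (hwn : ‖w‖^2 = ρ^2) (hvw : ⟪P - O, w⟫ = 0)
    (h : ∀ x : F, dist x O = ρ → dist (inversion P r x) D = d) :
    dist P O ≠ ρ := by
  intro hPO
  set v : F := P - O with hv
  have hvn : ‖v‖ = ρ := by rw [hv, ← dist_eq_norm]; exact hPO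
  set M := dist P D + d with hM
  have hM0 : 0 < M := add_pos_of_nonneg_of_pos dist_nonneg hd
  clear_value M
  set δ := min (1/2 : ℝ) (r^4/(4*M^2*ρ^2)) with hδ
  have hδ0 : 0 < δ := lt_min (by norm_num) (by positivity)
  have hδhalf : δ ≤ 1/2 := min_le_left _ _
  have hδr : δ ≤ r^4/(4*M^2*ρ^2) := min_le_right _ _
  clear_value δ
  set α := 1 - δ with hα
  have hα0 : 0 ≤ α := by rw [hα]; linarith
  have hα1 : α ≤ 1 := by rw [hα]; linarith
  clear_value α
  set β := Real.sqrt (1 - α^2) with hβ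
  have hβ2 : β^2 = 1 - α^2 := Real.sq_sqrt (by nlinarith)
  clear_value β
  have hnorm : ∀ s t : ℝ, ‖s • v + t • w‖^2 = (s^2 + t^2) * ρ^2 := by
    intro s t
    rw [norm_add_sq_real, norm_smul, norm_smul, real_inner_smul_left,
      real_inner_smul_right, hvw, hvn]
    simp only [Real.norm_eq_abs, mul_pow, sq_abs, mul_zero, add_zero]
    nlinarith [hwn]
  set x : F := O + (α • v + β • w) with hx
  have hxO : dist x O = ρ := by
    have h1 : ‖x - O‖^2 = ρ^2 := by
      have h2 : x - O = α • v + β • w := by rw [hx]; abel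
      rw [h2, hnorm]; nlinarith [hβ2]
    rw [dist_eq_norm]
    exact (sq_eq_sq₀ (norm_nonneg _) hρ.le).mp h1
  have hxP2 : ‖x - P‖^2 = 2*δ*ρ^2 := by
    have h2 : x - P = (α - 1) • v + β • w := by
      rw [hx, hv]; module
    rw [h2, hnorm]; nlinarith [hβ2]
  have hxPpos : 0 < dist x P := by
    rw [dist_eq_norm]
    have h5 : ‖x - P‖^2 > 0 := by rw [hxP2]; positivity
    have h6 : ‖x - P‖ ≠ 0 := by intro h0; rw [h0] at h5; norm_num at h5
    exact lt_of_le_of_ne (norm_nonneg _) (Ne.symm h6)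
  have hbound : dist P (inversion P r x) ≤ M := by
    have h1 := h x hxO
    calc dist P (inversion P r x) ≤ dist P D + dist D (inversion P r x) := dist_triangle _ _ _
    _ = M := by rw [hM, dist_comm D, h1]
  rw [dist_center_inversion, dist_comm P x] at hbound
  have h2 : r^2 ≤ M * dist x P := by
    rw [div_le_iff₀ hxPpos] at hbound; linarith
  have h3 : r^4 ≤ M^2 * (dist x P)^2 := by nlinarith [hr, hM0, hxPpos]
  rw [dist_eq_norm, hxP2] at h3
  have h4 : M^2 * (2*δ*ρ^2) ≤ r^4/2 := by
    have h6 := hδr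
    rw [le_div_iff₀ (by positivity : (0:ℝ) < 4*M^2*ρ^2)] at h6
    nlinarith [sq_nonneg M, sq_nonneg ρ]
  linarith [pow_pos hr 4]

lemma aux_not_center_on_sphere (P O D : EuclideanSpace ℝ (Fin 2)) (ρ d r : ℝ)
    (hρ : 0 < ρ) (hd : 0 < d) (hr : 0 < r)
    (h : ∀ x : EuclideanSpace ℝ (Fin 2), dist x O = ρ → dist (inversion P r x) D = d) :
    dist P O ≠ ρ := by
  intro hPO
  set v : EuclideanSpace ℝ (Fin 2) := P - O with hv
  have hvn : ‖v‖ = ρ := by rw [hv, ← dist_eq_norm]; exact hPO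
  set w : EuclideanSpace ℝ (Fin 2) := (WithLp.equiv 2 _).symm ![-v 1, v 0] with hw
  have hvw : ⟪v, w⟫ = 0 := by
    simp only [hw, PiLp.inner_apply, Fin.sum_univ_two, WithLp.equiv_symm_apply, PiLp.toLp_apply,
      RCLike.inner_apply, conj_trivial, Matrix.cons_val_zero, Matrix.cons_val_one,
      Matrix.head_cons]
    ring
  have hwn : ‖w‖^2 = ρ^2 := by
    have h1 : ⟪w, w⟫ = ‖w‖^2 := real_inner_self_eq_norm_sq w
    have h2 : ⟪v, v⟫ = ‖v‖^2 := real_inner_self_eq_norm_sq v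
    have h3 : ⟪w, w⟫ = ⟪v, v⟫ := by
      simp only [hw, PiLp.inner_apply, Fin.sum_univ_two, WithLp.equiv_symm_apply, PiLp.toLp_apply,
        RCLike.inner_apply, conj_trivial, Matrix.cons_val_zero, Matrix.cons_val_one,
        Matrix.head_cons]
      ring
    rw [← h1, h3, h2, hvn]
  exact aux_not_center_gen P O D ρ d r hρ hd hr w hwn hvw h hPO

lemma aux_tangent_pt_eq (O₁ O₂ T : F) (ρ₁ ρ₂ : ℝ) (h₁ : 0 < ρ₁) (h₂ : 0 < ρ₂)
    (hd : dist O₁ O₂ = ρ₁ + ρ₂) (hT₁ : dist O₁ T = ρ₁) (hT₂ : dist O₂ T = ρ₂) :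
    T = AffineMap.lineMap O₁ O₂ (ρ₁/(ρ₁+ρ₂)) := by
  have hw : Wbtw ℝ O₁ T O₂ := by
    rw [← dist_add_dist_eq_iff, hT₁, dist_comm T O₂, hT₂, hd]
  obtain ⟨θ, hθ, hT⟩ := hw
  have hdist : dist O₁ T = |θ| * (ρ₁ + ρ₂) := by
    rw [← hT, ← hd, dist_comm O₁ _, dist_lineMap_left, Real.norm_eq_abs]
  have hθ0 : 0 ≤ θ := hθ.1
  have hθval : θ = ρ₁/(ρ₁+ρ₂) := by
    rw [hT₁, abs_of_nonneg hθ0] at hdist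
    field_simp
    linarith [hdist]
  rw [← hT, hθval]

lemma aux_mem_line {U V P : F} {t : ℝ} (h : U - P = t • (V - P)) (ht : t ≠ 1) :
    P ∈ line[ℝ, U, V] := by
  have hne : t - 1 ≠ 0 := sub_ne_zero.mpr ht
  have h1 : P = AffineMap.lineMap U V (t/(t-1)) := by
    have h2 : (t - 1) • P = t • V - U := by
      linear_combination (norm := module) h
    have h4 : P = (t-1)⁻¹ • (t • V - U) := by
      rw [← h2, inv_smul_smul₀ hne]
    rw [h4, AffineMap.lineMap_apply_module']
    match_scalars <;> (field_simp; try ring)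
  rw [h1]
  exact AffineMap.lineMap_mem_affineSpan_pair _ _ _

lemma aux_swap_vec (A C P : F) (a c r : ℝ) (ha : 0 < a) (hc : 0 < c) (hr : 0 < r)
    (hPA : dist P A ≠ a)
    (h : ∀ x : F, dist x A = a → dist (inversion P r x) C = c) :
    (‖C - P‖^2 - c^2) • (A - P) = (r^2) • (C - P) := by
  set q := A - P with hq
  set s := C - P with hs
  set K := ‖s‖^2 - c^2 with hK
  -- the key identity for points on the sphere
  have key : ∀ x : F, dist x A = a →
      r^4 - 2*r^2*⟪x - P, s⟫ + K*‖x - P‖^2 = 0 := by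
    intro x hx
    have hxP : x ≠ P := by
      intro h0; apply hPA; rw [← hx, h0, dist_comm]
    have hdpos : 0 < dist x P := dist_pos.mpr hxP
    have hinv := h x hx
    have hform : inversion P r x - C = ((r/dist x P)^2) • (x - P) - s := by
      rw [EuclideanGeometry.inversion]
      simp only [vsub_eq_sub, vadd_eq_add, hs]
      abel
    have hnc : ‖((r/dist x P)^2) • (x - P) - s‖ = c := by
      rw [← hform, ← dist_eq_norm]; exact hinv
    have hsq : ‖((r/dist x P)^2) • (x - P) - s‖^2 = c^2 := by rw [hnc]
    rw [norm_sub_sq_real, norm_smul, real_inner_smul_left] at hsq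
    rw [Real.norm_eq_abs, abs_pow, sq_abs] at hsq
    have hdn : ‖x - P‖ = dist x P := (dist_eq_norm x P).symm
    rw [hdn]
    have hd0 : dist x P ≠ 0 := ne_of_gt hdpos
    rw [hdn] at hsq
    field_simp at hsq
    have h10 : (r^4 - 2*r^2*⟪x - P, s⟫ + K*(dist x P)^2) * (dist x P)^4 = 0 := by
      linear_combination (dist x P)^4 * hsq
    rcases mul_eq_zero.mp h10 with h11 | h11
    · exact h11
    · exact absurd h11 (pow_ne_zero 4 hd0)
  -- apply to A ± a • e for unit vectors e
  have unit : ∀ e : F, ‖e‖ = 1 → ⟪e, K • q - (r^2) • s⟫ = 0 := by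
    intro e he
    have h1 := key (A + a • e) (by
      rw [dist_eq_norm]
      simp only [add_sub_cancel_left, norm_smul, Real.norm_eq_abs, he, mul_one]
      exact abs_of_pos ha)
    have h2 := key (A - a • e) (by
      rw [dist_eq_norm]
      have : A - a • e - A = -(a • e) := by abel
      rw [this, norm_neg]
      simp only [norm_smul, Real.norm_eq_abs, he, mul_one]
      exact abs_of_pos ha)
    have e1 : A + a • e - P = q + a • e := by rw [hq]; abel
    have e2 : A - a • e - P = q - a • e := by rw [hq]; abel
    rw [e1] at h1
    rw [e2] at h2
    rw [inner_add_left, real_inner_smul_left] at h1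
    rw [inner_sub_left, real_inner_smul_left] at h2
    rw [norm_add_sq_real] at h1
    rw [norm_sub_sq_real] at h2
    rw [real_inner_smul_right, norm_smul, Real.norm_eq_abs, he, mul_one] at h1 h2
    rw [sq_abs] at h1 h2
    rw [inner_sub_right, real_inner_smul_right, real_inner_smul_right]
    rw [real_inner_comm q e]
    have ha' : (4*a) ≠ 0 := by positivity
    have h6 : (4*a) * (K * ⟪q, e⟫ - r^2 * ⟪e, s⟫) = 0 := by linear_combination h1 - h2
    rcases mul_eq_zero.mp h6 with h7 | h7
    · exact absurd h7 ha'
    · linarith [h7]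
  -- conclude
  by_contra hne
  have hm : K • q - (r^2) • s ≠ 0 := sub_ne_zero.mpr hne
  have hmm := unit (‖K • q - (r^2) • s‖⁻¹ • (K • q - (r^2) • s)) (norm_smul_inv_norm hm)
  rw [real_inner_smul_left, real_inner_self_eq_norm_sq] at hmm
  have hnm : ‖K • q - (r^2) • s‖ ≠ 0 := norm_ne_zero_iff.mpr hm
  have h9 : ‖K • q - (r^2) • s‖⁻¹ * ‖K • q - (r^2) • s‖^2 = ‖K • q - (r^2) • s‖ := by
    rw [pow_two (‖K • q - (r^2) • s‖), ← mul_assoc, inv_mul_cancel₀ hnm, one_mul]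
  rw [h9] at hmm
  exact hnm hmm

end AuxLemmas

/-- Uniqueness of the inversion circle swapping `O_A` and `O_C` while fixing
`O_B`: its center lies on line `AC` and on line `XZ`, and its radius is the
distance from the center to `Y`. -/
theorem inversion_circle_unique
    (A B C X Y Z P : EuclideanSpace ℝ (Fin 2)) (a b c r : ℝ)
    (ha : 0 < a) (hb : 0 < b) (hc : 0 < c) (hr : 0 < r)
    (hAB : dist A B = a + b) (hBC : dist B C = b + c) (hAC : dist A C = a + c)
    (hZA : dist A Z = a) (hZB : dist B Z = b)
    (hXB : dist B X = b) (hXC : dist C X = c)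
    (hYA : dist A Y = a) (hYC : dist C Y = c)
    (hswap : EuclideanGeometry.inversion P r '' Metric.sphere A a =
      Metric.sphere C c)
    (hfix : EuclideanGeometry.inversion P r '' Metric.sphere B b =
      Metric.sphere B b) :
    P ∈ line[ℝ, A, C] ∧ P ∈ line[ℝ, X, Z] ∧ r = dist P Y := by
  have hsubAC : ∀ x : EuclideanSpace ℝ (Fin 2), dist x A = a →
      dist (inversion P r x) C = c := by
    intro x hx
    have hmem : inversion P r x ∈ Metric.sphere C c := by
      rw [← hswap]
      exact Set.mem_image_of_mem _ (by simpa [Metric.mem_sphere, dist_eq_norm] using hx)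
    simpa [Metric.mem_sphere, dist_eq_norm] using hmem
  have hsubB : ∀ x : EuclideanSpace ℝ (Fin 2), dist x B = b →
      dist (inversion P r x) B = b := by
    intro x hx
    have hmem : inversion P r x ∈ Metric.sphere B b := by
      rw [← hfix]
      exact Set.mem_image_of_mem _ (by simpa [Metric.mem_sphere, dist_eq_norm] using hx)
    simpa [Metric.mem_sphere, dist_eq_norm] using hmem
  have hPA : dist P A ≠ a := aux_not_center_on_sphere P A C a c r ha hc hr hsubAC
  -- tangent point characterizations
  have hYlm : Y = AffineMap.lineMap A C (a/(a+c)) :=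
    aux_tangent_pt_eq A C Y a c ha hc hAC hYA hYC
  have hZlm : Z = AffineMap.lineMap A B (a/(a+b)) :=
    aux_tangent_pt_eq A B Z a b ha hb hAB hZA hZB
  have hXlm : X = AffineMap.lineMap B C (b/(b+c)) :=
    aux_tangent_pt_eq B C X b c hb hc hBC hXB hXC
  -- X ≠ Z
  have hXZ : X ≠ Z := by
    intro hEq
    have hab : (0:ℝ) < a + b := by linarith
    have hbc : (0:ℝ) < b + c := by linarith
    set θ₁ := a/(a+b) with hθ₁
    set θ₂ := b/(b+c) with hθ₂
    have hθ₂0 : θ₂ ≠ 0 := by rw [hθ₂]; positivity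
    have hW1 : X = θ₁ • (B - A) + A := by
      rw [hEq, hZlm, AffineMap.lineMap_apply_module']
    have hW2 : X = θ₂ • (C - B) + B := by
      rw [hXlm, AffineMap.lineMap_apply_module']
    have e1 : θ₂ • (C - B) = (θ₁ - 1) • (B - A) := by
      have : θ₁ • (B - A) + A = θ₂ • (C - B) + B := by rw [← hW1, ← hW2]
      linear_combination (norm := module) -this
    have e2 : C - B = (θ₂⁻¹ * (θ₁ - 1)) • (B - A) := by
      rw [mul_smul, ← e1, inv_smul_smul₀ hθ₂0]
    have e3 : C - A = (θ₂⁻¹ * (θ₁ - 1) + 1) • (B - A) := by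
      rw [add_smul, ← e2, one_smul]; abel
    have hco : θ₂⁻¹ * (θ₁ - 1) + 1 = (a - c)/(a + b) := by
      rw [hθ₁, hθ₂]
      field_simp
      ring
    have hnormCA : dist C A = |(a-c)/(a+b)| * dist B A := by
      rw [dist_eq_norm, dist_eq_norm, e3, hco, norm_smul, Real.norm_eq_abs]
    rw [dist_comm C A, hAC, dist_comm B A, hAB] at hnormCA
    rw [abs_div, abs_of_pos hab] at hnormCA
    have : a + c = |a - c| := by
      field_simp at hnormCA
      linarith [hnormCA]
    rcases abs_cases (a - c) with ⟨h1, _⟩ | ⟨h1, _⟩ <;> rw [h1] at this <;> linarith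
  -- Z ≠ P and Y ≠ P
  have hZP : Z ≠ P := by
    intro h0; apply hPA; rw [dist_comm, ← h0]; exact hZA
  have hYP : Y ≠ P := by
    intro h0; apply hPA; rw [dist_comm, ← h0]; exact hYA
  -- inversion Z = X
  have hiZC : dist (inversion P r Z) C = c := hsubAC Z (by rw [dist_comm]; exact hZA)
  have hiZB : dist (inversion P r Z) B = b := hsubB Z (by rw [dist_comm]; exact hZB)
  have hiZX : inversion P r Z = X := by
    rw [aux_tangent_pt_eq B C (inversion P r Z) b c hb hc hBC
      (by rw [dist_comm]; exact hiZB) (by rw [dist_comm]; exact hiZC), hXlm]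
  -- inversion Y = Y
  have hYC' : Y ∈ Metric.sphere C c := by rw [Metric.mem_sphere, dist_comm]; exact hYC
  have hiYA : dist (inversion P r Y) A = a := by
    rw [← hswap] at hYC'
    obtain ⟨x, hx, hxY⟩ := hYC'
    rw [← hxY, inversion_inversion P (ne_of_gt hr) x]
    simpa [Metric.mem_sphere, dist_eq_norm] using hx
  have hiYC : dist (inversion P r Y) C = c := hsubAC Y (by rw [dist_comm]; exact hYA)
  have hiYY : inversion P r Y = Y := by
    rw [aux_tangent_pt_eq A C (inversion P r Y) a c ha hc hAC
      (by rw [dist_comm]; exact hiYA) (by rw [dist_comm]; exact hiYC), hYlm]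
  -- r = dist P Y
  have hrY : r = dist P Y := by
    have h1 : dist P Y = r^2 / dist P Y := by
      conv_lhs => rw [← hiYY]
      rw [dist_center_inversion]
    have h2 : 0 < dist P Y := dist_pos.mpr (Ne.symm hYP)
    have h3 : (dist P Y)^2 = r^2 := by
      field_simp at h1
      linarith [h1]
    exact ((sq_eq_sq₀ hr.le h2.le).mp h3.symm)
  -- P ∈ line AC
  have hvec := aux_swap_vec A C P a c r ha hc hr hPA hsubAC
  have hCP : C ≠ P := by
    intro h0
    rw [h0] at hvec
    simp only [sub_self, smul_zero, norm_zero] at hvec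
    have hK : (0:ℝ)^2 - c^2 ≠ 0 := by simp; positivity
    have hAP : A - P = 0 := by
      have := smul_eq_zero.mp hvec
      rcases this with h1 | h1
      · exact absurd h1 hK
      · exact h1
    have : A = P := by rwa [sub_eq_zero] at hAP
    rw [this, ← h0] at hAC
    simp at hAC
    linarith
  have hKne : ‖C - P‖^2 - c^2 ≠ 0 := by
    intro h0
    rw [h0, zero_smul] at hvec
    have : C - P = 0 := by
      have := smul_eq_zero.mp hvec.symm
      rcases this with h1 | h1
      · exact absurd h1 (by positivity)
      · exact h1
    exact hCP (by rwa [sub_eq_zero] at this)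
  have hACline : P ∈ line[ℝ, A, C] := by
    have h1 : A - P = ((‖C - P‖^2 - c^2)⁻¹ * r^2) • (C - P) := by
      rw [mul_smul, ← hvec, inv_smul_smul₀ hKne]
    apply aux_mem_line h1
    intro h0
    rw [h0, one_smul] at h1
    have : A = C := sub_left_inj.mp h1
    rw [this] at hAC
    simp at hAC
    linarith
  -- P ∈ line XZ
  have hXZline : P ∈ line[ℝ, X, Z] := by
    have h1 : X - P = ((r / dist Z P)^2) • (Z - P) := by
      rw [← hiZX, EuclideanGeometry.inversion]
      simp only [vsub_eq_sub, vadd_eq_add]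
      abel
    apply aux_mem_line h1
    intro h0
    rw [h0, one_smul] at h1
    exact hXZ (sub_left_inj.mp h1)
  exact ⟨hACline, hXZline, hrY⟩
end

section
/- In a three-circle configuration, let B' be a point lying both on the line through X and Z and on the line through A and C. Suppose S is a point and s > 0 with dist S A = s + a, dist S B = s + b, dist S C = s + c (an Apollonian circle externally tangent to all three circles), and let Q be the point of tangency of the circle centered at S with radius s and the circle centered at B with radius b. Then dist B' Q = dist B' Y (Q lies on the inversion circle centered at B' through Y), and S lies on the line through B and Q. -/
open RealInnerProductSpace

theorem tangent_point_eq {E : Type*} [NormedAddCommGroup E] [InnerProductSpace ℝ E]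
    {P R W : E} {r₁ r₂ : ℝ} (h1 : 0 < r₁) (h2 : 0 < r₂)
    (hPR : dist P R = r₁ + r₂) (hPW : dist P W = r₁) (hWR : dist W R = r₂) :
    W - P = (r₁ / (r₁ + r₂)) • (R - P) := by
  have hseg : W ∈ segment ℝ P R := by
    rw [mem_segment_iff_wbtw, ← dist_add_dist_eq_iff, hPW, hWR, hPR]
  rw [segment_eq_image'] at hseg
  obtain ⟨t, ht, hW⟩ := hseg
  have hRP : ‖R - P‖ = r₁ + r₂ := by rw [← dist_eq_norm, dist_comm]; exact hPR
  have ht1 : r₁ = t * (r₁ + r₂) := by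
    have : dist P W = ‖t • (R - P)‖ := by
      rw [dist_eq_norm, ← hW]; simp [norm_sub_rev]
    rw [hPW, norm_smul, hRP, Real.norm_eq_abs, abs_of_nonneg ht.1] at this
    exact this
  have hne : r₁ + r₂ ≠ 0 := by positivity
  have htval : t = r₁ / (r₁ + r₂) := by field_simp; linarith
  rw [← hW, ← htval]
  exact add_sub_cancel_left P _

theorem inner_comb_sq {E : Type*} [NormedAddCommGroup E] [InnerProductSpace ℝ E]
    (x y z : E) (α β γ : ℝ) :
    ⟪α • x + β • y + γ • z, α • x + β • y + γ • z⟫ =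
      α^2 * ⟪x, x⟫ + β^2 * ⟪y, y⟫ + γ^2 * ⟪z, z⟫
      + 2*(α*β) * ⟪x, y⟫ + 2*(α*γ) * ⟪x, z⟫ + 2*(β*γ) * ⟪y, z⟫ := by
  simp only [inner_add_left, inner_add_right, real_inner_smul_left, real_inner_smul_right]
  rw [real_inner_comm y x, real_inner_comm z x, real_inner_comm z y]
  ring


set_option maxHeartbeats 2000000 in
/-- The tangency point `Q` of an Apollonian circle `O_S` with `O_B` lies on
the inversion circle centered at `B' = XZ ∩ AC` through `Y`, and the center
`S` lies on the line `BQ`. -/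
theorem apollonian_tangency_point_on_inversion_circle
    (A B C X Y Z B' S Q : EuclideanSpace ℝ (Fin 2)) (a b c s : ℝ)
    (ha : 0 < a) (hb : 0 < b) (hc : 0 < c) (hs : 0 < s)
    (hAB : dist A B = a + b) (hBC : dist B C = b + c) (hAC : dist A C = a + c)
    (hZA : dist A Z = a) (hZB : dist B Z = b)
    (hXB : dist B X = b) (hXC : dist C X = c)
    (hYA : dist A Y = a) (hYC : dist C Y = c)
    (hB'XZ : B' ∈ line[ℝ, X, Z]) (hB'AC : B' ∈ line[ℝ, A, C])
    (hSA : dist S A = s + a) (hSB : dist S B = s + b) (hSC : dist S C = s + c)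
    (hQS : dist S Q = s) (hQB : dist B Q = b) :
    dist B' Q = dist B' Y ∧ S ∈ line[ℝ, B, Q] := by
  have hab : a + b ≠ 0 := by positivity
  have hbc : b + c ≠ 0 := by positivity
  have hac : a + c ≠ 0 := by positivity
  have hsb : s + b ≠ 0 := by positivity
  -- tangency points as convex combinations
  have hZ : Z - A = (a / (a + b)) • (B - A) :=
    tangent_point_eq ha hb hAB hZA (by rw [dist_comm]; exact hZB)
  have hX : X - B = (b / (b + c)) • (C - B) :=
    tangent_point_eq hb hc hBC hXB (by rw [dist_comm]; exact hXC)
  have hY : Y - A = (a / (a + c)) • (C - A) :=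
    tangent_point_eq ha hc hAC hYA (by rw [dist_comm]; exact hYC)
  have hQ : Q - S = (s / (s + b)) • (B - S) :=
    tangent_point_eq hs hb hSB hQS (by rw [dist_comm]; exact hQB)
  -- Q relative to B
  have hQb : Q - B = (1 - s/(s+b)) • (S - B) := by
    have h2 : Q - B = (Q - S) + (S - B) := by abel
    rw [h2, hQ]; module
  -- Part 2 : S on line B Q
  have hcoef : ((s+b)/b) * (1 - s/(s+b)) = 1 := by field_simp; ring
  have hSmem : S ∈ line[ℝ, B, Q] := by
    have h3 : ((s+b)/b) • (Q -ᵥ B) +ᵥ B = S := by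
      show ((s+b)/b) • (Q - B) + B = S
      rw [hQb, smul_smul, hcoef, one_smul]; abel
    exact h3 ▸ smul_vsub_vadd_mem_affineSpan_pair ((s+b)/b) B Q
  refine ⟨?_, hSmem⟩
  -- extract line parameters
  obtain ⟨v, hv⟩ : ∃ v : ℝ, v • (C - A) = B' - A := by
    have h4 : (B' - A) +ᵥ A ∈ line[ℝ, A, C] := by simpa using hB'AC
    simpa using vadd_left_mem_affineSpan_pair.mp h4
  obtain ⟨u, hu⟩ : ∃ u : ℝ, u • (Z - X) = B' - X := by
    have h4 : (B' - X) +ᵥ X ∈ line[ℝ, X, Z] := by simpa using hB'XZ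
    simpa using vadd_left_mem_affineSpan_pair.mp h4
  -- Gram matrix facts
  have key : ∀ U V : EuclideanSpace ℝ (Fin 2), dist U V ^ 2 = ⟪U - V, U - V⟫ := by
    intro U V; rw [dist_eq_norm, real_inner_self_eq_norm_sq]
  have hpp : ⟪A - B, A - B⟫ = (a+b)^2 := by rw [← key, hAB]
  have hqq : ⟪C - B, C - B⟫ = (b+c)^2 := by rw [← key, dist_comm, hBC]
  have hσσ : ⟪S - B, S - B⟫ = (s+b)^2 := by rw [← key, hSB]
  have hpq : ⟪A - B, C - B⟫ = ((a+b)^2 + (b+c)^2 - (a+c)^2)/2 := by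
    have h5 : ⟪(A-B) - (C-B), (A-B) - (C-B)⟫ = (a+c)^2 := by
      have h6 : (A-B) - (C-B) = A - C := by abel
      rw [h6, ← key, hAC]
    rw [real_inner_sub_sub_self, hpp, hqq] at h5; linarith
  have hpσ : ⟪A - B, S - B⟫ = ((a+b)^2 + (s+b)^2 - (s+a)^2)/2 := by
    have h5 : ⟪(A-B) - (S-B), (A-B) - (S-B)⟫ = (s+a)^2 := by
      have h6 : (A-B) - (S-B) = A - S := by abel
      rw [h6, ← key, dist_comm, hSA]
    rw [real_inner_sub_sub_self, hpp, hσσ] at h5; linarith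
  have hqσ : ⟪C - B, S - B⟫ = ((b+c)^2 + (s+b)^2 - (s+c)^2)/2 := by
    have h5 : ⟪(C-B) - (S-B), (C-B) - (S-B)⟫ = (s+c)^2 := by
      have h6 : (C-B) - (S-B) = C - S := by abel
      rw [h6, ← key, dist_comm, hSC]
    rw [real_inner_sub_sub_self, hqq, hσσ] at h5; linarith
  -- the two expressions of B' - B
  have hw1 : B' - B = (A - B) + v • ((C - B) - (A - B)) := by
    have h2 : B' - B = (B' - A) + (A - B) := by abel
    rw [h2, ← hv]; module
  have hZb : Z - B = (1 - a/(a+b)) • (A - B) := by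
    have h2 : Z - B = (Z - A) + (A - B) := by abel
    rw [h2, hZ]; module
  have hw2 : B' - B = (b/(b+c)) • (C - B)
      + u • ((1 - a/(a+b)) • (A - B) - (b/(b+c)) • (C - B)) := by
    have h2 : B' - B = (B' - X) + (X - B) := by abel
    rw [h2, ← hu]
    have h3 : Z - X = (Z - B) - (X - B) := by abel
    rw [h3, hZb, hX]; module
  -- coefficient equations via linear independence (Gram determinant)
  have heq : ((1 - v) - u*(1 - a/(a+b))) • (A - B)
      + (v - (1-u)*(b/(b+c))) • (C - B) = 0 := by
    have h3 := hw1.symm.trans hw2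
    have h4 : ((1 - v) - u*(1 - a/(a+b))) • (A - B) + (v - (1-u)*(b/(b+c))) • (C - B)
        = ((A - B) + v • ((C - B) - (A - B)))
          - ((b/(b+c)) • (C - B) + u • ((1 - a/(a+b)) • (A - B) - (b/(b+c)) • (C - B))) := by
      module
    rw [h4, h3, sub_self]
  set α := (1 - v) - u*(1 - a/(a+b)) with hαdef
  set β := v - (1-u)*(b/(b+c)) with hβdef
  have e1 : α * ((a+b)^2) + β * (((a+b)^2 + (b+c)^2 - (a+c)^2)/2) = 0 := by
    have h5 := congrArg (fun x => ⟪x, A - B⟫) heq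
    simp only [inner_add_left, real_inner_smul_left, inner_zero_left] at h5
    rw [real_inner_comm (A-B) (C-B)] at h5
    rw [hpp, hpq] at h5; linarith
  have e2 : α * (((a+b)^2 + (b+c)^2 - (a+c)^2)/2) + β * ((b+c)^2) = 0 := by
    have h5 := congrArg (fun x => ⟪x, C - B⟫) heq
    simp only [inner_add_left, real_inner_smul_left, inner_zero_left] at h5
    rw [hpq] at h5; rw [hqq] at h5; linarith
  have hdet : (a+b)^2 * (b+c)^2 - (((a+b)^2 + (b+c)^2 - (a+c)^2)/2)^2
      = 4*a*b*c*(a+b+c) := by ring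
  have hdetpos : (0:ℝ) < 4*a*b*c*(a+b+c) := by positivity
  have hα : α = 0 := by
    have h6 : α * (4*a*b*c*(a+b+c)) = 0 := by
      rw [← hdet]; linear_combination ((b+c)^2) * e1 - (((a+b)^2 + (b+c)^2 - (a+c)^2)/2) * e2
    rcases mul_eq_zero.mp h6 with h | h
    · exact h
    · exact absurd h (ne_of_gt hdetpos)
  have hβ : β = 0 := by
    have h6 : β * (4*a*b*c*(a+b+c)) = 0 := by
      rw [← hdet]; linear_combination ((a+b)^2) * e2 - (((a+b)^2 + (b+c)^2 - (a+c)^2)/2) * e1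
    rcases mul_eq_zero.mp h6 with h | h
    · exact h
    · exact absurd h (ne_of_gt hdetpos)
  -- solve for v
  have hα' : (1 - v)*(a+b) - u*b = 0 := by
    have := hα; rw [hαdef] at this
    field_simp at this; linarith
  have hβ' : v*(b+c) - (1-u)*b = 0 := by
    have := hβ; rw [hβdef] at this
    field_simp at this; linarith
  have hv2 : v * (a - c) = a := by linear_combination -hα' - hβ'
  have hacne : a - c ≠ 0 := by
    intro h; rw [h, mul_zero] at hv2; exact (ne_of_gt ha) hv2.symm
  have hveq : v = a / (a - c) := by field_simp; linarith [hv2]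
  -- Y relative to B
  have hYb : Y - B = (A - B) + (a/(a+c)) • ((C - B) - (A - B)) := by
    have h2 : Y - B = (Y - A) + (A - B) := by abel
    rw [h2, hY]; module
  -- vectors B' - Q and B' - Y
  have hBQvec : B' - Q = (1-v) • (A - B) + v • (C - B) + (-(1 - s/(s+b))) • (S - B) := by
    have h2 : B' - Q = (B' - B) - (Q - B) := by abel
    rw [h2, hw1, hQb]; module
  have hBYvec : B' - Y = (a/(a+c) - v) • (A - B) + (v - a/(a+c)) • (C - B)
      + (0:ℝ) • (S - B) := by
    have h2 : B' - Y = (B' - B) - (Y - B) := by abel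
    rw [h2, hw1, hYb]; module
  -- squared distances
  have hsq : dist B' Q ^ 2 = dist B' Y ^ 2 := by
    rw [key, key, hBQvec, hBYvec, inner_comb_sq, inner_comb_sq,
        hpp, hqq, hσσ, hpq, hpσ, hqσ, hveq]
    field_simp
    ring
  exact (sq_eq_sq₀ dist_nonneg dist_nonneg).mp hsq
end

section
/- In a three-circle configuration, let B' be a point on line XZ and line AC, and C' a point on line XY and line AB. Suppose S is a point and s > 0 with dist S A = s + a, dist S B = s + b, dist S C = s + c, with Q the point of tangency of the circle centered at S with radius s and the circle centered at B with radius b, and R the point of tangency of the circle centered at S with radius s and the circle centered at C with radius c. Then Q ≠ R, S lies on the line through B and Q and on the line through C and R, dist B' Q = dist B' Y, dist C' R = dist C' Z, and dist S Q = s (so the Apollonian circle is recovered as the circle centered at the intersection of lines BQ and CR passing through Q). -/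
open RealInnerProductSpace

private lemma tangent_point_eq_s13 {E : Type*} [NormedAddCommGroup E] [InnerProductSpace ℝ E]
    (P₁ P₂ P : E) (r₁ r₂ : ℝ) (h₁ : 0 < r₁) (h₂ : 0 < r₂)
    (hd₁ : dist P₁ P = r₁) (hd₂ : dist P₂ P = r₂) (hd : dist P₁ P₂ = r₁ + r₂) :
    P - P₁ = (r₁ / (r₁ + r₂)) • (P₂ - P₁) := by
  have hr12 : r₁ + r₂ ≠ 0 := by positivity
  set u := P - P₁ with hu0
  set v := P₂ - P with hv0
  have hu : ‖u‖ = r₁ := by rw [hu0, ← dist_eq_norm', hd₁]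
  have hv : ‖v‖ = r₂ := by rw [hv0, ← dist_eq_norm, hd₂]
  have huv : P₂ - P₁ = u + v := by rw [hu0, hv0]; abel
  have hw : ‖u + v‖ = r₁ + r₂ := by rw [← huv, ← dist_eq_norm', hd]
  have huu : ⟪u, u⟫ = r₁ ^ 2 := by rw [real_inner_self_eq_norm_sq, hu]
  have hvv : ⟪v, v⟫ = r₂ ^ 2 := by rw [real_inner_self_eq_norm_sq, hv]
  have h1 : ⟪u + v, u + v⟫ = (r₁ + r₂) ^ 2 := by rw [real_inner_self_eq_norm_sq, hw]
  simp only [inner_add_left, inner_add_right] at h1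
  have hcomm : ⟪u, v⟫ = ⟪v, u⟫ := real_inner_comm v u
  have hiuv : ⟪v, u⟫ = r₁ * r₂ := by linear_combination (h1 - huu - hvv) / 2 - hcomm / 2
  have hiuv2 : ⟪u, v⟫ = r₁ * r₂ := hcomm.trans hiuv
  have hz : r₂ • u - r₁ • v = 0 := by
    have hn : ‖r₂ • u - r₁ • v‖ ^ 2 = 0 := by
      rw [← real_inner_self_eq_norm_sq]
      simp only [inner_sub_left, inner_sub_right, real_inner_smul_left, real_inner_smul_right]
      linear_combination r₂ ^ 2 * huu + r₁ ^ 2 * hvv - r₁ * r₂ * hiuv - r₁ * r₂ * hiuv2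
    exact norm_eq_zero.mp (sq_eq_zero_iff.mp hn)
  have hz' : r₂ • u = r₁ • v := sub_eq_zero.mp hz
  have h3 : (r₁ + r₂) • u = r₁ • (u + v) := by rw [add_smul, smul_add, hz']
  have h5 : (r₁ / (r₁ + r₂)) • (u + v) = u := by
    calc (r₁ / (r₁ + r₂)) • (u + v) = (1 / (r₁ + r₂)) • (r₁ • (u + v)) := by
          rw [smul_smul]; congr 1; ring
      _ = (1 / (r₁ + r₂)) • ((r₁ + r₂) • u) := by rw [h3]
      _ = u := by rw [smul_smul, one_div_mul_cancel hr12, one_smul]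
  rw [huv, h5]

private lemma norm_comb_sq {E : Type*} [NormedAddCommGroup E] [InnerProductSpace ℝ E]
    (β γ σ : E) (x y z : ℝ) :
    ‖x • β + y • γ + z • σ‖ ^ 2 =
      x ^ 2 * ⟪β, β⟫ + y ^ 2 * ⟪γ, γ⟫ + z ^ 2 * ⟪σ, σ⟫ +
      2 * x * y * ⟪β, γ⟫ + 2 * x * z * ⟪β, σ⟫ + 2 * y * z * ⟪γ, σ⟫ := by
  rw [← real_inner_self_eq_norm_sq]
  simp only [inner_add_left, inner_add_right, real_inner_smul_left, real_inner_smul_right]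
  rw [real_inner_comm β γ, real_inner_comm β σ, real_inner_comm γ σ]
  ring

private lemma indep_zero {E : Type*} [NormedAddCommGroup E] [InnerProductSpace ℝ E]
    (β γ : E) (p q : ℝ)
    (hD : 0 < ⟪β, β⟫ * ⟪γ, γ⟫ - ⟪β, γ⟫ ^ 2)
    (h : p • β + q • γ = 0) : p = 0 ∧ q = 0 := by
  have h1 : p * ⟪β, β⟫ + q * ⟪β, γ⟫ = 0 := by
    have h' := congrArg (fun w => ⟪β, w⟫) h
    simp only [inner_add_right, real_inner_smul_right, inner_zero_right] at h'
    exact h'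
  have h2 : p * ⟪β, γ⟫ + q * ⟪γ, γ⟫ = 0 := by
    have h' := congrArg (fun w => ⟪γ, w⟫) h
    simp only [inner_add_right, real_inner_smul_right, inner_zero_right] at h'
    rw [real_inner_comm β γ] at h'
    exact h'
  have hD' : ⟪β, β⟫ * ⟪γ, γ⟫ - ⟪β, γ⟫ ^ 2 ≠ 0 := ne_of_gt hD
  constructor
  · have hp : p * (⟪β, β⟫ * ⟪γ, γ⟫ - ⟪β, γ⟫ ^ 2) = 0 := by
      linear_combination ⟪γ, γ⟫ * h1 - ⟪β, γ⟫ * h2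
    exact (mul_eq_zero.mp hp).resolve_right hD'
  · have hq : q * (⟪β, β⟫ * ⟪γ, γ⟫ - ⟪β, γ⟫ ^ 2) = 0 := by
      linear_combination ⟪β, β⟫ * h2 - ⟪β, γ⟫ * h1
    exact (mul_eq_zero.mp hq).resolve_right hD'

set_option maxHeartbeats 1000000 in
/-- The Apollonian circle is recovered as the circle centered at the
intersection of lines `BQ` and `CR`, passing through `Q`. -/
theorem apollonian_circle_recovered
    (A B C X Y Z B' C' S Q R : EuclideanSpace ℝ (Fin 2)) (a b c s : ℝ)
    (ha : 0 < a) (hb : 0 < b) (hc : 0 < c) (hs : 0 < s)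
    (hAB : dist A B = a + b) (hBC : dist B C = b + c) (hAC : dist A C = a + c)
    (hZA : dist A Z = a) (hZB : dist B Z = b)
    (hXB : dist B X = b) (hXC : dist C X = c)
    (hYA : dist A Y = a) (hYC : dist C Y = c)
    (hB'XZ : B' ∈ line[ℝ, X, Z]) (hB'AC : B' ∈ line[ℝ, A, C])
    (hC'XY : C' ∈ line[ℝ, X, Y]) (hC'AB : C' ∈ line[ℝ, A, B])
    (hSA : dist S A = s + a) (hSB : dist S B = s + b) (hSC : dist S C = s + c)
    (hQS : dist S Q = s) (hQB : dist B Q = b)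
    (hRS : dist S R = s) (hRC : dist C R = c) :
    Q ≠ R ∧ S ∈ line[ℝ, B, Q] ∧ S ∈ line[ℝ, C, R] ∧
    dist B' Q = dist B' Y ∧ dist C' R = dist C' Z ∧ dist S Q = s := by
  have hsb : s + b ≠ 0 := by positivity
  have hsc : s + c ≠ 0 := by positivity
  have hab : a + b ≠ 0 := by positivity
  have hac' : a + c ≠ 0 := by positivity
  have hbc : b + c ≠ 0 := by positivity
  -- Gram matrix entries
  have hbb : ⟪B - A, B - A⟫ = (a + b) ^ 2 := by
    rw [real_inner_self_eq_norm_sq, ← dist_eq_norm', hAB]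
  have hgg : ⟪C - A, C - A⟫ = (a + c) ^ 2 := by
    rw [real_inner_self_eq_norm_sq, ← dist_eq_norm', hAC]
  have hss : ⟪S - A, S - A⟫ = (s + a) ^ 2 := by
    rw [real_inner_self_eq_norm_sq, ← dist_eq_norm, hSA]
  have hbg : ⟪B - A, C - A⟫ = a ^ 2 + a * b + a * c - b * c := by
    have h2 := norm_sub_sq_real (B - A) (C - A)
    rw [show (B - A) - (C - A) = B - C by abel, ← dist_eq_norm, hBC,
      ← dist_eq_norm' A B, hAB, ← dist_eq_norm' A C, hAC] at h2
    linear_combination h2 / 2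
  have hbs : ⟪B - A, S - A⟫ = a ^ 2 + a * b + s * a - s * b := by
    have h2 := norm_sub_sq_real (B - A) (S - A)
    rw [show (B - A) - (S - A) = B - S by abel, ← dist_eq_norm' S B, hSB,
      ← dist_eq_norm' A B, hAB, ← dist_eq_norm S A, hSA] at h2
    linear_combination h2 / 2
  have hgs : ⟪C - A, S - A⟫ = a ^ 2 + a * c + s * a - s * c := by
    have h2 := norm_sub_sq_real (C - A) (S - A)
    rw [show (C - A) - (S - A) = C - S by abel, ← dist_eq_norm' S C, hSC,
      ← dist_eq_norm' A C, hAC, ← dist_eq_norm S A, hSA] at h2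
    linear_combination h2 / 2
  have hD : 0 < ⟪B - A, B - A⟫ * ⟪C - A, C - A⟫ - ⟪B - A, C - A⟫ ^ 2 := by
    rw [hbb, hgg, hbg]
    have : (a + b) ^ 2 * (a + c) ^ 2 - (a ^ 2 + a * b + a * c - b * c) ^ 2 =
        4 * a * b * c * (a + b + c) := by ring
    rw [this]; positivity
  -- tangent points as affine combinations
  have hZv : Z - A = (a / (a + b)) • (B - A) := tangent_point_eq_s13 A B Z a b ha hb hZA hZB hAB
  have hXv : X - B = (b / (b + c)) • (C - B) := tangent_point_eq_s13 B C X b c hb hc hXB hXC hBC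
  have hYv : Y - A = (a / (a + c)) • (C - A) := tangent_point_eq_s13 A C Y a c ha hc hYA hYC hAC
  have hQv : Q - S = (s / (s + b)) • (B - S) := tangent_point_eq_s13 S B Q s b hs hb hQS hQB hSB
  have hRv : R - S = (s / (s + c)) • (C - S) := tangent_point_eq_s13 S C R s c hs hc hRS hRC hSC
  have hXA : X - A = (1 - b / (b + c)) • (B - A) + (b / (b + c)) • (C - A) := by
    rw [show X - A = (X - B) + (B - A) by abel, hXv,
      show C - B = (C - A) - (B - A) by abel]
    module
  -- Q ≠ R
  have hQneR : Q ≠ R := by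
    intro h
    have hBS : B - S = ((s + b) / s) • (Q - S) := by
      rw [hQv, smul_smul, show (s + b) / s * (s / (s + b)) = 1 by
        field_simp, one_smul]
    have hCS : C - S = ((s + c) / s) • (R - S) := by
      rw [hRv, smul_smul, show (s + c) / s * (s / (s + c)) = 1 by
        field_simp, one_smul]
    rw [← h] at hCS
    have hBCv : B - C = ((b - c) / s) • (Q - S) := by
      rw [show B - C = (B - S) - (C - S) by abel, hBS, hCS, ← sub_smul,
        show (s + b) / s - (s + c) / s = (b - c) / s by ring]
    have hnorm : (b : ℝ) + c = |b - c| := by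
      have h1 : ‖B - C‖ = b + c := by rw [← dist_eq_norm, hBC]
      have h2 : ‖Q - S‖ = s := by rw [← dist_eq_norm', hQS]
      rw [hBCv, norm_smul, Real.norm_eq_abs, h2, abs_div, abs_of_pos hs,
        div_mul_cancel₀ _ (ne_of_gt hs)] at h1
      linarith [h1]
    rcases abs_cases (b - c) with ⟨he, _⟩ | ⟨he, _⟩ <;> rw [he] at hnorm <;> linarith
  refine ⟨hQneR, ?_, ?_, ?_, ?_, hQS⟩
  -- S ∈ line[B, Q]
  · have hQBv : Q - B = (s / (s + b) - 1) • (B - S) := by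
      rw [show Q - B = (Q - S) - (B - S) by abel, hQv]; module
    have key : ((s + b) / b) • (Q - B) = S - B := by
      rw [hQBv, smul_smul, show (s + b) / b * (s / (s + b) - 1) = -1 by
        field_simp; ring]
      module
    have h := smul_vsub_vadd_mem_affineSpan_pair ((s + b) / b) B Q
    rw [vsub_eq_sub, vadd_eq_add, key, sub_add_cancel] at h
    exact h
  -- S ∈ line[C, R]
  · have hRCv : R - C = (s / (s + c) - 1) • (C - S) := by
      rw [show R - C = (R - S) - (C - S) by abel, hRv]; module
    have key : ((s + c) / c) • (R - C) = S - C := by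
      rw [hRCv, smul_smul, show (s + c) / c * (s / (s + c) - 1) = -1 by
        field_simp; ring]
      module
    have h := smul_vsub_vadd_mem_affineSpan_pair ((s + c) / c) C R
    rw [vsub_eq_sub, vadd_eq_add, key, sub_add_cancel] at h
    exact h
  -- dist B' Q = dist B' Y
  · obtain ⟨t, ht⟩ : ∃ r : ℝ, r • (C - A) = B' - A := by
      have h := hB'AC
      rw [show B' = (B' - A) +ᵥ A by simp] at h
      obtain ⟨r, hr⟩ := vadd_left_mem_affineSpan_pair.mp h
      exact ⟨r, by simpa using hr⟩
    obtain ⟨u, hu⟩ : ∃ r : ℝ, r • (Z - X) = B' - X := by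
      have h := hB'XZ
      rw [show B' = (B' - X) +ᵥ X by simp] at h
      obtain ⟨r, hr⟩ := vadd_left_mem_affineSpan_pair.mp h
      exact ⟨r, by simpa using hr⟩
    have hZX : Z - X = (a / (a + b) - (1 - b / (b + c))) • (B - A) +
        (-(b / (b + c))) • (C - A) := by
      rw [show Z - X = (Z - A) - (X - A) by abel, hZv, hXA]; module
    have hveq : (u * (a / (a + b) - (1 - b / (b + c))) + (1 - b / (b + c))) • (B - A) +
        (u * (-(b / (b + c))) + b / (b + c) - t) • (C - A) = 0 := by
      calc (u * (a / (a + b) - (1 - b / (b + c))) + (1 - b / (b + c))) • (B - A) +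
            (u * (-(b / (b + c))) + b / (b + c) - t) • (C - A)
          = (u • (Z - X) + (X - A)) - t • (C - A) := by rw [hZX, hXA]; module
        _ = 0 := by rw [hu, ht]; abel
    obtain ⟨hc₁, hc₂⟩ := indep_zero (B - A) (C - A) _ _ hD hveq
    have key1 : u * b * (a - c) + c * (a + b) = 0 := by
      field_simp at hc₁
      have h' : (b + c) * (u * b * (a - c) + c * (a + b)) = 0 := by linear_combination (b + c) * hc₁
      exact (mul_eq_zero.mp h').resolve_left hbc
    have hacne : a ≠ c := by
      intro h; rw [h] at key1; nlinarith
    have hacsub : a - c ≠ 0 := sub_ne_zero.mpr hacne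
    have h2' : t * (b + c) = b - u * b := by
      field_simp at hc₂
      exact mul_right_cancel₀ hbc (by linear_combination -(b + c) * hc₂)
    have h3 : (t * (a - c)) * (b + c) = a * (b + c) := by
      linear_combination (a - c) * h2' - key1
    have htval : t = a / (a - c) := by
      rw [eq_div_iff hacsub]
      exact mul_right_cancel₀ hbc h3
    have hB'v : B' - A = (a / (a - c)) • (C - A) := by rw [← ht, htval]
    have hv1 : B' - Q = (-(s / (s + b))) • (B - A) + (a / (a - c)) • (C - A) +
        (s / (s + b) - 1) • (S - A) := by
      rw [show B' - Q = (B' - A) - ((Q - S) + (S - A)) by abel, hB'v, hQv,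
        show B - S = (B - A) - (S - A) by abel]
      module
    have hv2 : B' - Y = (0 : ℝ) • (B - A) + (a / (a - c) - a / (a + c)) • (C - A) +
        (0 : ℝ) • (S - A) := by
      rw [show B' - Y = (B' - A) - (Y - A) by abel, hB'v, hYv]; module
    have hsq : dist B' Q ^ 2 = dist B' Y ^ 2 := by
      rw [dist_eq_norm, dist_eq_norm, hv1, hv2, norm_comb_sq, norm_comb_sq,
        hbb, hgg, hss, hbg, hbs, hgs]
      field_simp
      ring
    have h := congrArg Real.sqrt hsq
    rwa [Real.sqrt_sq dist_nonneg, Real.sqrt_sq dist_nonneg] at h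
  -- dist C' R = dist C' Z
  · obtain ⟨t, ht⟩ : ∃ r : ℝ, r • (B - A) = C' - A := by
      have h := hC'AB
      rw [show C' = (C' - A) +ᵥ A by simp] at h
      obtain ⟨r, hr⟩ := vadd_left_mem_affineSpan_pair.mp h
      exact ⟨r, by simpa using hr⟩
    obtain ⟨u, hu⟩ : ∃ r : ℝ, r • (Y - X) = C' - X := by
      have h := hC'XY
      rw [show C' = (C' - X) +ᵥ X by simp] at h
      obtain ⟨r, hr⟩ := vadd_left_mem_affineSpan_pair.mp h
      exact ⟨r, by simpa using hr⟩
    have hYX : Y - X = (-(1 - b / (b + c))) • (B - A) +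
        (a / (a + c) - b / (b + c)) • (C - A) := by
      rw [show Y - X = (Y - A) - (X - A) by abel, hYv, hXA]; module
    have hveq : (u * (-(1 - b / (b + c))) + (1 - b / (b + c)) - t) • (B - A) +
        (u * (a / (a + c) - b / (b + c)) + b / (b + c)) • (C - A) = 0 := by
      calc (u * (-(1 - b / (b + c))) + (1 - b / (b + c)) - t) • (B - A) +
            (u * (a / (a + c) - b / (b + c)) + b / (b + c)) • (C - A)
          = (u • (Y - X) + (X - A)) - t • (B - A) := by rw [hYX, hXA]; module
        _ = 0 := by rw [hu, ht]; abel
    obtain ⟨hc₁, hc₂⟩ := indep_zero (B - A) (C - A) _ _ hD hveq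
    have key1 : u * c * (a - b) + b * (a + c) = 0 := by
      field_simp at hc₂
      have h' : (b + c) * (u * c * (a - b) + b * (a + c)) = 0 := by
        linear_combination (b + c) * hc₂
      exact (mul_eq_zero.mp h').resolve_left hbc
    have habne : a ≠ b := by
      intro h; rw [h] at key1; nlinarith
    have habsub : a - b ≠ 0 := sub_ne_zero.mpr habne
    have h2' : t * (b + c) = c - u * c := by
      field_simp at hc₁
      exact mul_right_cancel₀ hbc (by linear_combination -(b + c) * hc₁)
    have h3 : (t * (a - b)) * (b + c) = a * (b + c) := by
      linear_combination (a - b) * h2' - key1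
    have htval : t = a / (a - b) := by
      rw [eq_div_iff habsub]
      exact mul_right_cancel₀ hbc h3
    have hC'v : C' - A = (a / (a - b)) • (B - A) := by rw [← ht, htval]
    have hv3 : C' - R = (a / (a - b)) • (B - A) + (-(s / (s + c))) • (C - A) +
        (s / (s + c) - 1) • (S - A) := by
      rw [show C' - R = (C' - A) - ((R - S) + (S - A)) by abel, hC'v, hRv,
        show C - S = (C - A) - (S - A) by abel]
      module
    have hv4 : C' - Z = (a / (a - b) - a / (a + b)) • (B - A) + (0 : ℝ) • (C - A) +
        (0 : ℝ) • (S - A) := by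
      rw [show C' - Z = (C' - A) - (Z - A) by abel, hC'v, hZv]; module
    have hsq : dist C' R ^ 2 = dist C' Z ^ 2 := by
      rw [dist_eq_norm, dist_eq_norm, hv3, hv4, norm_comb_sq, norm_comb_sq,
        hbb, hgg, hss, hbg, hbs, hgs]
      field_simp
      ring
    have h := congrArg Real.sqrt hsq
    rwa [Real.sqrt_sq dist_nonneg, Real.sqrt_sq dist_nonneg] at h
end

section
/- In a three-circle configuration, the lines AX, BY, and CZ are concurrent: there exists a point P lying on the line through A and X, on the line through B and Y, and on the line through C and Z (the triangles ABC and XYZ are perspective from a point, the Gergonne point). -/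
open AffineMap

lemma between_eq_lineMap (A B Z : EuclideanSpace ℝ (Fin 2)) (a b : ℝ)
    (ha : 0 < a) (hb : 0 < b)
    (hAB : dist A B = a + b) (hZA : dist A Z = a) (hZB : dist B Z = b) :
    Z = lineMap A B (a / (a + b)) := by
  have hw : Wbtw ℝ A Z B := by
    rw [← dist_add_dist_eq_iff]
    rw [dist_comm Z B, hZA, hZB, hAB]
  obtain ⟨t, ht, rfl⟩ := hw
  have := dist_left_lineMap A B t
  rw [hZA, hAB] at this
  have ht0 : (0:ℝ) ≤ t := ht.1
  have : t * (a + b) = a := by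
    rw [Real.norm_eq_abs, abs_of_nonneg ht0] at this; linarith
  have hab : a + b ≠ 0 := by positivity
  have : t = a / (a + b) := by field_simp; linarith
  rw [this]

/-- In a three-circle configuration, the lines `AX`, `BY`, `CZ` are
concurrent (at the Gergonne point). -/
theorem gergonne_point_exists
    (A B C X Y Z : EuclideanSpace ℝ (Fin 2)) (a b c : ℝ)
    (ha : 0 < a) (hb : 0 < b) (hc : 0 < c)
    (hAB : dist A B = a + b) (hBC : dist B C = b + c) (hAC : dist A C = a + c)
    (hZA : dist A Z = a) (hZB : dist B Z = b)
    (hXB : dist B X = b) (hXC : dist C X = c)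
    (hYA : dist A Y = a) (hYC : dist C Y = c) :
    ∃ P : EuclideanSpace ℝ (Fin 2),
      P ∈ line[ℝ, A, X] ∧ P ∈ line[ℝ, B, Y] ∧ P ∈ line[ℝ, C, Z] := by
  have hZ : Z = lineMap A B (a / (a + b)) := between_eq_lineMap A B Z a b ha hb hAB hZA hZB
  have hX : X = lineMap B C (b / (b + c)) := between_eq_lineMap B C X b c hb hc hBC hXB hXC
  have hY : Y = lineMap A C (a / (a + c)) := between_eq_lineMap A C Y a c ha hc hAC hYA hYC
  set s : ℝ := a*b + b*c + a*c with hs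
  have hs0 : s ≠ 0 := by positivity
  have hab : a + b ≠ 0 := by positivity
  have hbc : b + c ≠ 0 := by positivity
  have hac : a + c ≠ 0 := by positivity
  refine ⟨lineMap A X (a * (b + c) / s), lineMap_mem_affineSpan_pair _ _ _, ?_, ?_⟩
  · have : lineMap A X (a * (b + c) / s) = lineMap B Y (b * (a + c) / s) := by
      rw [hX, hY]
      simp only [lineMap_apply, vsub_eq_sub, vadd_eq_add]
      match_scalars <;> field_simp <;> ring
    rw [this]; exact lineMap_mem_affineSpan_pair _ _ _
  · have : lineMap A X (a * (b + c) / s) = lineMap C Z (c * (a + b) / s) := by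
      rw [hX, hZ]
      simp only [lineMap_apply, vsub_eq_sub, vadd_eq_add]
      match_scalars <;> field_simp <;> ring
    rw [this]; exact lineMap_mem_affineSpan_pair _ _ _
end

section
/- In a three-circle configuration, let A' be a point lying on line BC and on line YZ, B' a point lying on line CA and on line ZX, and C' a point lying on line AB and on line XY. Then A', B', C' are collinear (the Gergonne line: triangles ABC and XYZ are perspective from a line). -/
/-- The tangent point on a side: if `dist A B = a + b`, `dist A Z = a`, `dist B Z = b`,
then `Z` divides `AB` in ratio `a : b`. -/
private lemma touch_pt (A B Z : EuclideanSpace ℝ (Fin 2)) {a b : ℝ} (ha : 0 < a) (hb : 0 < b)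
    (hAB : dist A B = a + b) (hZA : dist A Z = a) (hZB : dist B Z = b) :
    Z -ᵥ A = (a / (a + b)) • (B -ᵥ A) := by
  have hab : (0:ℝ) < a + b := by linarith
  have hw : Wbtw ℝ A Z B := by
    rw [← dist_add_dist_eq_iff, hZA, dist_comm Z B, hZB, hAB]
  obtain ⟨t, ht, hZt⟩ := hw
  have h1 : dist A Z = ‖t‖ * dist A B := by rw [← hZt, dist_left_lineMap]
  rw [hZA, hAB, Real.norm_eq_abs, abs_of_nonneg ht.1] at h1
  have ht' : t = a / (a + b) := by field_simp; linarith
  rw [← hZt, AffineMap.lineMap_apply, vadd_vsub, ht']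

/-- The Gergonne line: in a three-circle configuration, the points
`A' = BC ∩ YZ`, `B' = CA ∩ ZX`, `C' = AB ∩ XY` are collinear. -/
theorem gergonne_line
    (A B C X Y Z A' B' C' : EuclideanSpace ℝ (Fin 2)) (a b c : ℝ)
    (ha : 0 < a) (hb : 0 < b) (hc : 0 < c)
    (hAB : dist A B = a + b) (hBC : dist B C = b + c) (hAC : dist A C = a + c)
    (hZA : dist A Z = a) (hZB : dist B Z = b)
    (hXB : dist B X = b) (hXC : dist C X = c)
    (hYA : dist A Y = a) (hYC : dist C Y = c)
    (hA'BC : A' ∈ line[ℝ, B, C]) (hA'YZ : A' ∈ line[ℝ, Y, Z])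
    (hB'CA : B' ∈ line[ℝ, C, A]) (hB'ZX : B' ∈ line[ℝ, Z, X])
    (hC'AB : C' ∈ line[ℝ, A, B]) (hC'XY : C' ∈ line[ℝ, X, Y]) :
    Collinear ℝ ({A', B', C'} : Set (EuclideanSpace ℝ (Fin 2))) := by
  have hab : (0:ℝ) < a + b := by linarith
  have hac : (0:ℝ) < a + c := by linarith
  have hbc : (0:ℝ) < b + c := by linarith
  -- triangle is nondegenerate
  have hncol : ¬ Collinear ℝ ({A, B, C} : Set (EuclideanSpace ℝ (Fin 2))) := by
    intro h
    rcases h.wbtw_or_wbtw_or_wbtw with h | h | h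
    · have := h.dist_add_dist
      rw [hAB, hBC, hAC] at this; linarith
    · have := h.dist_add_dist
      rw [hBC, dist_comm C A, hAC, dist_comm B A, hAB] at this; linarith
    · have := h.dist_add_dist
      rw [dist_comm C A, hAC, hAB, dist_comm C B, hBC] at this; linarith
  -- linear independence of the side vectors
  have hli : ∀ s t : ℝ, s • (B -ᵥ A) + t • (C -ᵥ A) = 0 → s = 0 ∧ t = 0 := by
    intro s t hst
    have hBA : B ≠ A := by
      intro h; rw [h, dist_self] at hAB; linarith
    by_cases ht : t = 0
    · subst ht
      rw [zero_smul, add_zero, smul_eq_zero] at hst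
      rcases hst with h | h
      · exact ⟨h, rfl⟩
      · exact absurd (vsub_eq_zero_iff_eq.mp h) hBA
    · exfalso
      apply hncol
      have hv : (C -ᵥ A) = (t⁻¹ * (-s)) • (B -ᵥ A) := by
        have h1 : t • (C -ᵥ A) = (-s) • (B -ᵥ A) := by
          linear_combination (norm := module) hst
        rw [mul_smul, ← h1, inv_smul_smul₀ ht]
      rw [collinear_iff_of_mem (Set.mem_insert A {B, C})]
      refine ⟨B -ᵥ A, ?_⟩
      intro p hp
      simp only [Set.mem_insert_iff, Set.mem_singleton_iff] at hp
      rcases hp with rfl | rfl | rfl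
      · exact ⟨0, by simp⟩
      · exact ⟨1, by simp⟩
      · exact ⟨t⁻¹ * (-s), by rw [← hv, vsub_vadd]⟩
  -- tangency points
  have hZ : Z -ᵥ A = (a / (a + b)) • (B -ᵥ A) := touch_pt A B Z ha hb hAB hZA hZB
  have hY : Y -ᵥ A = (a / (a + c)) • (C -ᵥ A) := touch_pt A C Y ha hc hAC hYA hYC
  have hXB' : X -ᵥ B = (b / (b + c)) • (C -ᵥ B) := touch_pt B C X hb hc hBC hXB hXC
  have hX : X -ᵥ A = (1 - b / (b + c)) • (B -ᵥ A) + (b / (b + c)) • (C -ᵥ A) := by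
    rw [← vsub_add_vsub_cancel X B A, hXB',
      show C -ᵥ B = (C -ᵥ A) - (B -ᵥ A) from (vsub_sub_vsub_cancel_right C B A).symm]
    module
  -- extract parameters from line memberships
  have extract : ∀ {P p₁ p₂ : EuclideanSpace ℝ (Fin 2)}, P ∈ line[ℝ, p₁, p₂] →
      ∃ r : ℝ, r • (p₂ -ᵥ p₁) = P -ᵥ p₁ := by
    intro P p₁ p₂ h
    rw [← vsub_vadd P p₁] at h
    exact vadd_left_mem_affineSpan_pair.mp h
  obtain ⟨s, hs⟩ := extract hA'BC
  obtain ⟨r, hr⟩ := extract hA'YZ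
  obtain ⟨q, hq⟩ := extract hB'CA
  obtain ⟨w, hw⟩ := extract hB'ZX
  obtain ⟨m, hm⟩ := extract hC'AB
  obtain ⟨n, hn⟩ := extract hC'XY
  -- two expressions for A' -ᵥ A
  have hA'1 : A' -ᵥ A = (1 - s) • (B -ᵥ A) + s • (C -ᵥ A) := by
    rw [← vsub_add_vsub_cancel A' B A, ← hs,
      show C -ᵥ B = (C -ᵥ A) - (B -ᵥ A) from (vsub_sub_vsub_cancel_right C B A).symm]
    module
  have hA'2 : A' -ᵥ A = (r * (a / (a + b))) • (B -ᵥ A) + ((1 - r) * (a / (a + c))) • (C -ᵥ A) := by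
    rw [← vsub_add_vsub_cancel A' Y A, ← hr,
      show Z -ᵥ Y = (Z -ᵥ A) - (Y -ᵥ A) from (vsub_sub_vsub_cancel_right Z Y A).symm,
      hZ, hY]
    module
  obtain ⟨e1, e2⟩ := hli ((1 - s) - r * (a / (a + b))) (s - (1 - r) * (a / (a + c))) (by
    have hh : ((1 - s) - r * (a / (a + b))) • (B -ᵥ A) + (s - (1 - r) * (a / (a + c))) • (C -ᵥ A)
        = ((1 - s) • (B -ᵥ A) + s • (C -ᵥ A))
          - ((r * (a / (a + b))) • (B -ᵥ A) + ((1 - r) * (a / (a + c))) • (C -ᵥ A)) := by module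
    rw [hh, ← hA'1, ← hA'2, sub_self])
  -- s * (b - c) = b
  have hsv : s * (b - c) = b := by
    have E1 : (1 - s) * (a + b) = r * a := by
      field_simp at e1; linarith
    have E2 : s * (a + c) = (1 - r) * a := by
      field_simp at e2; linarith
    linear_combination -E1 - E2
  -- two expressions for B' -ᵥ A
  have hB'1 : B' -ᵥ A = (0:ℝ) • (B -ᵥ A) + (1 - q) • (C -ᵥ A) := by
    rw [← vsub_add_vsub_cancel B' C A, ← hq,
      show A -ᵥ C = -(C -ᵥ A) from (neg_vsub_eq_vsub_rev C A).symm]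
    module
  have hB'2 : B' -ᵥ A = (w * ((1 - b / (b + c)) - a / (a + b)) + a / (a + b)) • (B -ᵥ A)
      + (w * (b / (b + c))) • (C -ᵥ A) := by
    rw [← vsub_add_vsub_cancel B' Z A, ← hw,
      show X -ᵥ Z = (X -ᵥ A) - (Z -ᵥ A) from (vsub_sub_vsub_cancel_right X Z A).symm,
      hX, hZ]
    module
  obtain ⟨f1, f2⟩ := hli ((0:ℝ) - (w * ((1 - b / (b + c)) - a / (a + b)) + a / (a + b)))
      ((1 - q) - w * (b / (b + c))) (by
    have hh : ((0:ℝ) - (w * ((1 - b / (b + c)) - a / (a + b)) + a / (a + b))) • (B -ᵥ A)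
        + ((1 - q) - w * (b / (b + c))) • (C -ᵥ A)
        = ((0:ℝ) • (B -ᵥ A) + (1 - q) • (C -ᵥ A))
          - ((w * ((1 - b / (b + c)) - a / (a + b)) + a / (a + b)) • (B -ᵥ A)
            + (w * (b / (b + c))) • (C -ᵥ A)) := by module
    rw [hh, ← hB'1, ← hB'2, sub_self])
  -- (1 - q) * (a - c) = a
  have hpv : (1 - q) * (a - c) = a := by
    have F1 : w * (b * (c - a)) = -(a * (b + c)) := by
      field_simp at f1
      have F1' : (w * (b * (c - a)) + a * (b + c)) * (a + b) = 0 := by linear_combination -(a + b) * f1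
      have := (mul_eq_zero.mp F1').resolve_right hab.ne'
      linarith
    have F2 : (1 - q) * (b + c) = w * b := by
      field_simp at f2; linarith
    have key : ((1 - q) * (a - c) - a) * (b + c) = 0 := by
      linear_combination (a - c) * F2 - F1
    rcases mul_eq_zero.mp key with h | h
    · linarith
    · linarith
  -- two expressions for C' -ᵥ A
  have hC'1 : C' -ᵥ A = m • (B -ᵥ A) + (0:ℝ) • (C -ᵥ A) := by
    rw [← hm]; module
  have hC'2 : C' -ᵥ A = ((1 - n) * (1 - b / (b + c))) • (B -ᵥ A)
      + (n * (a / (a + c) - b / (b + c)) + b / (b + c)) • (C -ᵥ A) := by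
    rw [← vsub_add_vsub_cancel C' X A, ← hn,
      show Y -ᵥ X = (Y -ᵥ A) - (X -ᵥ A) from (vsub_sub_vsub_cancel_right Y X A).symm,
      hY, hX]
    module
  obtain ⟨g1, g2⟩ := hli (m - (1 - n) * (1 - b / (b + c)))
      ((0:ℝ) - (n * (a / (a + c) - b / (b + c)) + b / (b + c))) (by
    have hh : (m - (1 - n) * (1 - b / (b + c))) • (B -ᵥ A)
        + ((0:ℝ) - (n * (a / (a + c) - b / (b + c)) + b / (b + c))) • (C -ᵥ A)
        = (m • (B -ᵥ A) + (0:ℝ) • (C -ᵥ A))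
          - (((1 - n) * (1 - b / (b + c))) • (B -ᵥ A)
            + (n * (a / (a + c) - b / (b + c)) + b / (b + c)) • (C -ᵥ A)) := by module
    rw [hh, ← hC'1, ← hC'2, sub_self])
  -- m * (a - b) = a
  have hmv : m * (a - b) = a := by
    have G1 : m * (b + c) = (1 - n) * c := by
      field_simp at g1; linarith
    have G2 : n * (c * (a - b)) = -(b * (a + c)) := by
      field_simp at g2
      have G2' : (n * (c * (a - b)) + b * (a + c)) * (b + c) = 0 := by linear_combination -(b + c) * g2
      have := (mul_eq_zero.mp G2').resolve_right hbc.ne'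
      linarith
    have key : (m * (a - b) - a) * (b + c) = 0 := by
      linear_combination (a - b) * G1 - G2
    rcases mul_eq_zero.mp key with h | h
    · linarith
    · linarith
  -- nondegeneracy of the differences
  have hab' : a - b ≠ 0 := by
    intro h; rw [h, mul_zero] at hmv; linarith
  have hden : c * (a - b) ≠ 0 := mul_ne_zero hc.ne' hab'
  -- the key proportionality
  have hkey : (c * (a - b)) • (C' -ᵥ A') = (b * (a - c)) • (B' -ᵥ A') := by
    rw [← vsub_sub_vsub_cancel_right C' A' A, ← vsub_sub_vsub_cancel_right B' A' A,
      hC'1, hB'1, hA'1]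
    match_scalars
    · linear_combination c * hmv - a * hsv
    · linear_combination -b * hpv + a * hsv
  have hCA' : C' -ᵥ A' = ((c * (a - b))⁻¹ * (b * (a - c))) • (B' -ᵥ A') := by
    rw [mul_smul, ← hkey, inv_smul_smul₀ hden]
  -- conclude collinearity
  rw [collinear_iff_of_mem (Set.mem_insert A' {B', C'})]
  refine ⟨B' -ᵥ A', ?_⟩
  intro p hp
  simp only [Set.mem_insert_iff, Set.mem_singleton_iff] at hp
  rcases hp with rfl | rfl | rfl
  · exact ⟨0, by simp⟩
  · exact ⟨1, by simp⟩
  · exact ⟨(c * (a - b))⁻¹ * (b * (a - c)), by rw [← hCA', vsub_vadd]⟩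
end

section
/- In a three-circle configuration, the line through X and Z is parallel to the line through A and C if and only if a = c (the construction point B' = XZ ∩ AC fails to exist exactly when the circles O_A and O_C have equal radii). -/
/-- In a three-circle configuration, line `XZ` is parallel to line `AC` if
and only if `a = c`. -/
theorem XZ_parallel_AC_iff_radii_equal
    (A B C X Y Z : EuclideanSpace ℝ (Fin 2)) (a b c : ℝ)
    (ha : 0 < a) (hb : 0 < b) (hc : 0 < c)
    (hAB : dist A B = a + b) (hBC : dist B C = b + c) (hAC : dist A C = a + c)
    (hZA : dist A Z = a) (hZB : dist B Z = b)
    (hXB : dist B X = b) (hXC : dist C X = c)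
    (hYA : dist A Y = a) (hYC : dist C Y = c) :
    AffineSubspace.Parallel line[ℝ, X, Z] line[ℝ, A, C] ↔ a = c := by
  have hab : (0:ℝ) < a + b := by linarith
  have hbc : (0:ℝ) < b + c := by linarith
  have hwZ : Wbtw ℝ A Z B := by
    rw [← dist_add_dist_eq_iff, hZA, dist_comm Z B, hZB, hAB]
  have hwX : Wbtw ℝ B X C := by
    rw [← dist_add_dist_eq_iff, hXB, dist_comm X C, hXC, hBC]
  obtain ⟨t, ht, hZt⟩ := hwZ
  obtain ⟨s, hs, hXs⟩ := hwX
  rw [AffineMap.lineMap_apply] at hZt hXs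
  have hZv : Z - A = (a / (a + b)) • (B - A) := by
    have h1 : Z - A = t • (B - A) := by
      rw [← hZt]; simp [vsub_eq_sub, vadd_eq_add]
    have h2 : dist A Z = t * (a + b) := by
      rw [dist_eq_norm, ← neg_sub Z A, norm_neg, h1, norm_smul, Real.norm_eq_abs,
        abs_of_nonneg ht.1, ← dist_eq_norm, dist_comm B A, hAB]
    have ht' : t = a / (a + b) := by
      field_simp
      linarith [h2.symm.trans hZA]
    rw [h1, ht']
  have hXv : X - B = (b / (b + c)) • (C - B) := by
    have h1 : X - B = s • (C - B) := by
      rw [← hXs]; simp [vsub_eq_sub, vadd_eq_add]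
    have h2 : dist B X = s * (b + c) := by
      rw [dist_eq_norm, ← neg_sub X B, norm_neg, h1, norm_smul, Real.norm_eq_abs,
        abs_of_nonneg hs.1, ← dist_eq_norm, dist_comm C B, hBC]
    have hs' : s = b / (b + c) := by
      field_simp
      linarith [h2.symm.trans hXB]
    rw [h1, hs']
  have hkey : X - Z = (1 - a / (a + b) - b / (b + c)) • (B - A) + (b / (b + c)) • (C - A) := by
    have hdecomp : X - Z = (X - B) + (B - A) - (Z - A) := by abel
    rw [hdecomp, hXv, hZv]
    module
  have hncol : ¬ Collinear ℝ ({A, B, C} : Set (EuclideanSpace ℝ (Fin 2))) := by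
    intro hcol
    rcases hcol.wbtw_or_wbtw_or_wbtw with h | h | h
    · have := h.dist_add_dist; rw [hAB, hBC, hAC] at this; linarith
    · have := h.dist_add_dist; rw [hBC, dist_comm C A, hAC, dist_comm B A, hAB] at this; linarith
    · have := h.dist_add_dist; rw [dist_comm C A, hAC, hAB, dist_comm C B, hBC] at this; linarith
  have hACne : A ≠ C := by
    intro h; rw [h, dist_self] at hAC; linarith
  have hind : ∀ x y : ℝ, x • (B - A) + y • (C - A) = 0 → x = 0 := by
    intro x y hxy
    by_contra hx
    apply hncol
    rw [collinear_iff_of_mem (Set.mem_insert A {B, C})]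
    refine ⟨C - A, fun p hp => ?_⟩
    simp only [Set.mem_insert_iff, Set.mem_singleton_iff] at hp
    rcases hp with rfl | rfl | rfl
    · exact ⟨0, by simp⟩
    · refine ⟨-y / x, ?_⟩
      have h2 : x • (p - A) = (-y) • (C - A) := by
        linear_combination (norm := module) hxy
      have h4 := congrArg (fun v : EuclideanSpace ℝ (Fin 2) => x⁻¹ • v) h2
      simp only [smul_smul, inv_mul_cancel₀ hx, one_smul] at h4
      have : p = (x⁻¹ * -y) • (C - A) + A := by
        rw [← h4]; abel
      rw [this]
      simp [vadd_eq_add, div_eq_inv_mul]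
    · exact ⟨1, by simp⟩
  constructor
  · intro hpar
    rw [AffineSubspace.affineSpan_pair_parallel_iff_vectorSpan_eq,
      vectorSpan_pair, vectorSpan_pair] at hpar
    have hmem : X -ᵥ Z ∈ (ℝ ∙ (A -ᵥ C)) := by
      rw [← hpar]; exact Submodule.mem_span_singleton_self _
    rw [Submodule.mem_span_singleton] at hmem
    obtain ⟨r, hr⟩ := hmem
    have hXZ : X - Z = r • (A - C) := by
      simp only [vsub_eq_sub] at hr; exact hr.symm
    have h0 : (1 - a / (a + b) - b / (b + c)) • (B - A) + (b / (b + c) + r) • (C - A) = 0 := by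
      linear_combination (norm := module) hXZ - hkey
    have hcoef := hind _ _ h0
    field_simp at hcoef
    nlinarith [hcoef]
  · intro hac
    subst hac
    rw [AffineSubspace.affineSpan_pair_parallel_iff_vectorSpan_eq, vectorSpan_pair, vectorSpan_pair]
    have hco : (1 : ℝ) - a / (a + b) - b / (b + a) = 0 := by
      field_simp
      ring
    rw [hco, zero_smul, zero_add] at hkey
    have hXZ' : X -ᵥ Z = (-(b / (b + a))) • (A -ᵥ C) := by
      simp only [vsub_eq_sub]
      rw [hkey]; module
    rw [hXZ']
    refine Submodule.span_singleton_smul_eq ?_ _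
    apply IsUnit.neg
    simp only [isUnit_iff_ne_zero]
    positivity
end
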